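/- arXiv:2412.16368 — 3 statements merged into one kernel-verified Lean document; each statement's English description precedes it below -/
import Mathlib

section
/- Let P be a full interval-closed set of [m]×[n] viewed as a subposet, let I be an interval-closed set of P with lower path L and upper path U. Then: the elements above L and below U are exactly those in I; the elements below both L and U are exactly Δ(I) \ I; the elements above both L and U are exactly ∇(I) \ I; and the elements below L and above U are exactly those incomparable with every element of I. -/
/-- A subset `I` of a poset is interval-closed if for all `x, y ∈ I` and `z`
with `x < z < y`, we have `z ∈ I`. -/
def IsIntervalClosed {P : Type*} [PartialOrder P] (I : Finset P) : Prop :=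
  ∀ x ∈ I, ∀ y ∈ I, ∀ z : P, x < z → z < y → z ∈ I

/-- A lattice path from `(0,n)` to `(m+n,m)` with steps `(1,1)` and `(1,-1)`,
encoded by its heights at the integer points `0,…,m+n`. -/
def IsGridPath (m n : ℕ) (p : ℕ → ℤ) : Prop :=
  p 0 = n ∧ p (m + n) = m ∧ ∀ i < m + n, p (i + 1) = p i + 1 ∨ p (i + 1) = p i - 1

/-- The x-coordinate of the poset element `(a,b) = (e.1+1, e.2+1)` of `[m]×[n]`
in the Cartesian coordinates used for the lattice paths: `a - b + n`. -/
def elemX {m n : ℕ} (e : Fin m × Fin n) : ℕ := e.1.1 + (n - e.2.1)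

/-- The y-coordinate of the element `(a,b)`: `a + b - 1`. -/
def elemY {m n : ℕ} (e : Fin m × Fin n) : ℕ := e.1.1 + e.2.1 + 1

/-- `U` is the upper path of `I`: the lowest grid path leaving all elements of `I`
below it. -/
def IsUpperPath (m n : ℕ) (I : Finset (Fin m × Fin n)) (U : ℕ → ℤ) : Prop :=
  IsGridPath m n U ∧ (∀ e ∈ I, (elemY e : ℤ) < U (elemX e)) ∧
    ∀ q : ℕ → ℤ, IsGridPath m n q → (∀ e ∈ I, (elemY e : ℤ) < q (elemX e)) →
      ∀ i ≤ m + n, U i ≤ q i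

/-- `L` is the lower path of `I`: the highest grid path leaving all elements of `I`
above it. -/
def IsLowerPath (m n : ℕ) (I : Finset (Fin m × Fin n)) (L : ℕ → ℤ) : Prop :=
  IsGridPath m n L ∧ (∀ e ∈ I, L (elemX e) < (elemY e : ℤ)) ∧
    ∀ q : ℕ → ℤ, IsGridPath m n q → (∀ e ∈ I, q (elemX e) < (elemY e : ℤ)) →
      ∀ i ≤ m + n, q i ≤ L i

/-- `I` is full if its lower and upper paths share no points other than their
endpoints. -/
def IsFull (m n : ℕ) (I : Finset (Fin m × Fin n)) : Prop :=
  ∀ L U : ℕ → ℤ, IsLowerPath m n I L → IsUpperPath m n I U →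
    ∀ i : ℕ, 0 < i → i < m + n → L i ≠ U i

section Aux

variable {m n : ℕ}

lemma coords (z : Fin m × Fin n) :
    (elemX z : ℤ) = z.1.1 + n - z.2.1 ∧ (elemY z : ℤ) = z.1.1 + z.2.1 + 1 ∧
      (z.1.1 : ℤ) < m ∧ (z.2.1 : ℤ) < n := by
  have h1 := z.1.isLt
  have h2 := z.2.isLt
  simp only [elemX, elemY]
  push_cast [Nat.cast_sub h2.le]
  omega

lemma elemX_le (z : Fin m × Fin n) : elemX z ≤ m + n := by
  have h1 := z.1.isLt
  have h2 := z.2.isLt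
  simp only [elemX]
  omega

lemma le_coords (e z : Fin m × Fin n) : e ≤ z ↔ (e.1.1 ≤ z.1.1 ∧ e.2.1 ≤ z.2.1) := by
  rw [Prod.le_def, Fin.le_def, Fin.le_def]

lemma gridLipAux {p : ℕ → ℤ} (hp : IsGridPath m n p) :
    ∀ d i, i + d ≤ m + n → (p (i + d) - p i ≤ d ∧ p i - p (i + d) ≤ d) := by
  intro d
  induction d with
  | zero => intro i _; simp
  | succ d ih =>
    intro i hi
    have h1 := ih i (by omega)
    have h2 := hp.2.2 (i + d) (by omega)
    rw [show i + (d + 1) = (i + d) + 1 from by omega]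
    push_cast
    omega

lemma gridLip {p : ℕ → ℤ} (hp : IsGridPath m n p) (i j : ℕ)
    (hi : i ≤ m + n) (hj : j ≤ m + n) :
    p j - p i ≤ max ((i : ℤ) - j) ((j : ℤ) - i) := by
  rcases le_total i j with h | h
  · obtain ⟨d, rfl⟩ := Nat.exists_eq_add_of_le h
    have := gridLipAux hp d i hj
    push_cast
    omega
  · obtain ⟨d, rfl⟩ := Nat.exists_eq_add_of_le h
    have := gridLipAux hp d j hi
    push_cast
    omega

lemma gridPar {p : ℕ → ℤ} (hp : IsGridPath m n p) :
    ∀ i, i ≤ m + n → p i % 2 = ((n : ℤ) + i) % 2 := by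
  intro i
  induction i with
  | zero => intro _; rw [hp.1]; omega
  | succ i ih =>
    intro h
    have h1 := hp.2.2 i (by omega)
    have h2 := ih (by omega)
    push_cast
    omega

lemma gridPath_fold_max {α : Type*} [DecidableEq α] (s : Finset α) (b : ℕ → ℤ)
    (f : α → ℕ → ℤ) (hb : IsGridPath m n b)
    (hbp : ∀ j, b j % 2 = ((n : ℤ) + j) % 2)
    (hstep : ∀ e ∈ s, ∀ j, f e (j + 1) = f e j + 1 ∨ f e (j + 1) = f e j - 1)
    (hpar : ∀ e ∈ s, ∀ j, f e j % 2 = ((n : ℤ) + j) % 2)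
    (h0 : ∀ e ∈ s, f e 0 ≤ n) (h1 : ∀ e ∈ s, f e (m + n) ≤ m) :
    IsGridPath m n (fun j => s.fold max (b j) (fun e => f e j)) ∧
      ∀ j, (s.fold max (b j) (fun e => f e j)) % 2 = ((n : ℤ) + j) % 2 := by
  induction s using Finset.induction_on with
  | empty => simpa using ⟨hb, hbp⟩
  | @insert a s ha ih =>
    have ihs := ih (fun e he => hstep e (Finset.mem_insert_of_mem he))
      (fun e he => hpar e (Finset.mem_insert_of_mem he))
      (fun e he => h0 e (Finset.mem_insert_of_mem he))
      (fun e he => h1 e (Finset.mem_insert_of_mem he))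
    have hamem : a ∈ insert a s := Finset.mem_insert_self a s
    simp only [Finset.fold_insert ha]
    constructor
    · refine ⟨?_, ?_, ?_⟩
      · show max (f a 0) (s.fold max (b 0) fun e => f e 0) = (n : ℤ)
        have e1 : s.fold max (b 0) (fun e => f e 0) = (n : ℤ) := ihs.1.1
        have e2 := h0 a hamem
        omega
      · show max (f a (m + n)) (s.fold max (b (m + n)) fun e => f e (m + n)) = (m : ℤ)
        have e1 : s.fold max (b (m + n)) (fun e => f e (m + n)) = (m : ℤ) := ihs.1.2.1
        have e2 := h1 a hamem
        omega
      · intro i hi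
        have hs : (s.fold max (b (i + 1)) fun e => f e (i + 1))
              = (s.fold max (b i) fun e => f e i) + 1 ∨
            (s.fold max (b (i + 1)) fun e => f e (i + 1))
              = (s.fold max (b i) fun e => f e i) - 1 := ihs.1.2.2 i hi
        have hsa := hstep a hamem i
        have hp1 := hpar a hamem i
        have hp2 := ihs.2 i
        show max (f a (i + 1)) (s.fold max (b (i + 1)) fun e => f e (i + 1))
              = max (f a i) (s.fold max (b i) fun e => f e i) + 1 ∨
          max (f a (i + 1)) (s.fold max (b (i + 1)) fun e => f e (i + 1))
              = max (f a i) (s.fold max (b i) fun e => f e i) - 1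
        omega
    · intro j
      have hp1 := hpar a hamem j
      have hp2 := ihs.2 j
      omega

lemma gridPath_fold_min {α : Type*} [DecidableEq α] (s : Finset α) (b : ℕ → ℤ)
    (f : α → ℕ → ℤ) (hb : IsGridPath m n b)
    (hbp : ∀ j, b j % 2 = ((n : ℤ) + j) % 2)
    (hstep : ∀ e ∈ s, ∀ j, f e (j + 1) = f e j + 1 ∨ f e (j + 1) = f e j - 1)
    (hpar : ∀ e ∈ s, ∀ j, f e j % 2 = ((n : ℤ) + j) % 2)
    (h0 : ∀ e ∈ s, (n : ℤ) ≤ f e 0) (h1 : ∀ e ∈ s, (m : ℤ) ≤ f e (m + n)) :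
    IsGridPath m n (fun j => s.fold min (b j) (fun e => f e j)) ∧
      ∀ j, (s.fold min (b j) (fun e => f e j)) % 2 = ((n : ℤ) + j) % 2 := by
  induction s using Finset.induction_on with
  | empty => simpa using ⟨hb, hbp⟩
  | @insert a s ha ih =>
    have ihs := ih (fun e he => hstep e (Finset.mem_insert_of_mem he))
      (fun e he => hpar e (Finset.mem_insert_of_mem he))
      (fun e he => h0 e (Finset.mem_insert_of_mem he))
      (fun e he => h1 e (Finset.mem_insert_of_mem he))
    have hamem : a ∈ insert a s := Finset.mem_insert_self a s
    simp only [Finset.fold_insert ha]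
    constructor
    · refine ⟨?_, ?_, ?_⟩
      · show min (f a 0) (s.fold min (b 0) fun e => f e 0) = (n : ℤ)
        have e1 : s.fold min (b 0) (fun e => f e 0) = (n : ℤ) := ihs.1.1
        have e2 := h0 a hamem
        omega
      · show min (f a (m + n)) (s.fold min (b (m + n)) fun e => f e (m + n)) = (m : ℤ)
        have e1 : s.fold min (b (m + n)) (fun e => f e (m + n)) = (m : ℤ) := ihs.1.2.1
        have e2 := h1 a hamem
        omega
      · intro i hi
        have hs : (s.fold min (b (i + 1)) fun e => f e (i + 1))
              = (s.fold min (b i) fun e => f e i) + 1 ∨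
            (s.fold min (b (i + 1)) fun e => f e (i + 1))
              = (s.fold min (b i) fun e => f e i) - 1 := ihs.1.2.2 i hi
        have hsa := hstep a hamem i
        have hp1 := hpar a hamem i
        have hp2 := ihs.2 i
        show min (f a (i + 1)) (s.fold min (b (i + 1)) fun e => f e (i + 1))
              = min (f a i) (s.fold min (b i) fun e => f e i) + 1 ∨
          min (f a (i + 1)) (s.fold min (b (i + 1)) fun e => f e (i + 1))
              = min (f a i) (s.fold min (b i) fun e => f e i) - 1
        omega
    · intro j
      have hp1 := hpar a hamem j
      have hp2 := ihs.2 j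
      omega

/-- Key lemma for the upper path. -/
lemma keyU {I : Finset (Fin m × Fin n)} {U : ℕ → ℤ} (hU : IsUpperPath m n I U)
    (z : Fin m × Fin n) :
    ((elemY z : ℤ) < U (elemX z) ↔ ∃ e ∈ I, z ≤ e) ∧
      (U (elemX z) < (elemY z : ℤ) ↔ ∀ e ∈ I, ¬ z ≤ e) := by
  obtain ⟨hzX, hzY, hza, hzb⟩ := coords z
  have hA : (∃ e ∈ I, z ≤ e) → (elemY z : ℤ) < U (elemX z) := by
    rintro ⟨e, he, hze⟩
    obtain ⟨heX, heY, hea, heb⟩ := coords e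
    have h1 := hU.2.1 e he
    have h2 := gridLip hU.1 (elemX z) (elemX e) (elemX_le z) (elemX_le e)
    have h3 := (le_coords z e).mp hze
    have h31 : (z.1.1 : ℤ) ≤ e.1.1 := by exact_mod_cast h3.1
    have h32 : (z.2.1 : ℤ) ≤ e.2.1 := by exact_mod_cast h3.2
    omega
  have hB : (∀ e ∈ I, ¬ z ≤ e) → U (elemX z) < (elemY z : ℤ) := by
    intro h
    set f : Fin m × Fin n → ℕ → ℤ :=
      fun e j => (elemY e : ℤ) + 1 - max ((j : ℤ) - elemX e) ((elemX e : ℤ) - j) with hf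
    set b : ℕ → ℤ := fun j => max ((n : ℤ) - j) ((j : ℤ) - n) with hbdef
    have hb : IsGridPath m n b := by
      refine ⟨by simp [hbdef], by simp only [hbdef]; push_cast; omega, ?_⟩
      intro i _
      simp only [hbdef]
      push_cast
      omega
    have hbp : ∀ j, b j % 2 = ((n : ℤ) + j) % 2 := by
      intro j; simp only [hbdef]; omega
    have hq := gridPath_fold_max I b f hb hbp
      (fun e _ j => by
        simp only [hf]
        push_cast
        omega)
      (fun e _ j => by
        obtain ⟨heX, heY, hea, heb⟩ := coords e
        simp only [hf]
        omega)
      (fun e _ => by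
        obtain ⟨heX, heY, hea, heb⟩ := coords e
        simp only [hf]
        push_cast
        omega)
      (fun e _ => by
        obtain ⟨heX, heY, hea, heb⟩ := coords e
        simp only [hf]
        push_cast
        omega)
    have hqI : ∀ e ∈ I, (elemY e : ℤ) < I.fold max (b (elemX e)) (fun e' => f e' (elemX e)) := by
      intro e he
      have h1 : f e (elemX e) ≤ I.fold max (b (elemX e)) (fun e' => f e' (elemX e)) :=
        (Finset.le_fold_max _).mpr (Or.inr ⟨e, he, le_rfl⟩)
      have hfe : f e (elemX e) = (elemY e : ℤ) + 1 := by
        simp only [hf]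
        omega
      omega
    have hmin : U (elemX z) ≤ I.fold max (b (elemX z)) (fun e => f e (elemX z)) :=
      hU.2.2 (fun j => I.fold max (b j) (fun e => f e j)) hq.1 hqI (elemX z) (elemX_le z)
    have hub : I.fold max (b (elemX z)) (fun e => f e (elemX z)) ≤ (elemY z : ℤ) - 1 := by
      refine (Finset.fold_max_le _).mpr ⟨by simp only [hbdef]; omega, ?_⟩
      intro e he
      obtain ⟨heX, heY, hea, heb⟩ := coords e
      have h3 := (le_coords z e).not.mp (h e he)
      rw [not_and_or, not_le, not_le] at h3
      have h31 : ¬ ((z.1.1 : ℤ) ≤ e.1.1) ∨ ¬ ((z.2.1 : ℤ) ≤ e.2.1) := by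
        rcases h3 with h3 | h3
        · left; exact_mod_cast (not_le.mpr h3)
        · right; exact_mod_cast (not_le.mpr h3)
      simp only [hf]
      omega
    omega
  constructor
  · constructor
    · intro hlt
      by_contra hc
      push_neg at hc
      have := hB hc
      omega
    · exact hA
  · constructor
    · intro hlt e he hze
      have := hA ⟨e, he, hze⟩
      omega
    · exact hB

/-- Key lemma for the lower path. -/
lemma keyL {I : Finset (Fin m × Fin n)} {L : ℕ → ℤ} (hL : IsLowerPath m n I L)
    (z : Fin m × Fin n) :
    (L (elemX z) < (elemY z : ℤ) ↔ ∃ e ∈ I, e ≤ z) ∧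
      ((elemY z : ℤ) < L (elemX z) ↔ ∀ e ∈ I, ¬ e ≤ z) := by
  obtain ⟨hzX, hzY, hza, hzb⟩ := coords z
  have hA : (∃ e ∈ I, e ≤ z) → L (elemX z) < (elemY z : ℤ) := by
    rintro ⟨e, he, hez⟩
    obtain ⟨heX, heY, hea, heb⟩ := coords e
    have h1 := hL.2.1 e he
    have h2 := gridLip hL.1 (elemX e) (elemX z) (elemX_le e) (elemX_le z)
    have h3 := (le_coords e z).mp hez
    have h31 : (e.1.1 : ℤ) ≤ z.1.1 := by exact_mod_cast h3.1
    have h32 : (e.2.1 : ℤ) ≤ z.2.1 := by exact_mod_cast h3.2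
    omega
  have hB : (∀ e ∈ I, ¬ e ≤ z) → (elemY z : ℤ) < L (elemX z) := by
    intro h
    set f : Fin m × Fin n → ℕ → ℤ :=
      fun e j => (elemY e : ℤ) - 1 + max ((j : ℤ) - elemX e) ((elemX e : ℤ) - j) with hf
    set b : ℕ → ℤ := fun j => min ((n : ℤ) + j) (2 * m + n - j) with hbdef
    have hb : IsGridPath m n b := by
      refine ⟨?_, ?_, ?_⟩
      · simp only [hbdef]; push_cast; omega
      · simp only [hbdef]; push_cast; omega
      · intro i _
        simp only [hbdef]
        push_cast
        omega
    have hbp : ∀ j, b j % 2 = ((n : ℤ) + j) % 2 := by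
      intro j; simp only [hbdef]; omega
    have hq := gridPath_fold_min I b f hb hbp
      (fun e _ j => by
        simp only [hf]
        push_cast
        omega)
      (fun e _ j => by
        obtain ⟨heX, heY, hea, heb⟩ := coords e
        simp only [hf]
        omega)
      (fun e _ => by
        obtain ⟨heX, heY, hea, heb⟩ := coords e
        simp only [hf]
        push_cast
        omega)
      (fun e _ => by
        obtain ⟨heX, heY, hea, heb⟩ := coords e
        simp only [hf]
        push_cast
        omega)
    have hqI : ∀ e ∈ I, I.fold min (b (elemX e)) (fun e' => f e' (elemX e)) < (elemY e : ℤ) := by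
      intro e he
      have h1 : I.fold min (b (elemX e)) (fun e' => f e' (elemX e)) ≤ f e (elemX e) :=
        (Finset.fold_min_le _).mpr (Or.inr ⟨e, he, le_rfl⟩)
      have hfe : f e (elemX e) = (elemY e : ℤ) - 1 := by
        simp only [hf]
        omega
      omega
    have hmax : I.fold min (b (elemX z)) (fun e => f e (elemX z)) ≤ L (elemX z) :=
      hL.2.2 (fun j => I.fold min (b j) (fun e => f e j)) hq.1 hqI (elemX z) (elemX_le z)
    have hlb : (elemY z : ℤ) + 1 ≤ I.fold min (b (elemX z)) (fun e => f e (elemX z)) := by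
      refine (Finset.le_fold_min _).mpr ⟨by simp only [hbdef]; omega, ?_⟩
      intro e he
      obtain ⟨heX, heY, hea, heb⟩ := coords e
      have h3 := (le_coords e z).not.mp (h e he)
      rw [not_and_or, not_le, not_le] at h3
      have h31 : ¬ ((e.1.1 : ℤ) ≤ z.1.1) ∨ ¬ ((e.2.1 : ℤ) ≤ z.2.1) := by
        rcases h3 with h3 | h3
        · left; exact_mod_cast (not_le.mpr h3)
        · right; exact_mod_cast (not_le.mpr h3)
      simp only [hf]
      omega
    omega
  constructor
  · constructor
    · intro hlt
      by_contra hc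
      push_neg at hc
      have := hB hc
      omega
    · exact hA
  · constructor
    · intro hlt e he hez
      have := hA ⟨e, he, hez⟩
      omega
    · exact hB

end Aux

/-- Let `P` be a full interval-closed set of `[m]×[n]` viewed as a subposet, and
let `I` be an interval-closed set of `P` with lower path `L` and upper path `U`.
Then the elements of `P` above `L` and below `U` are exactly those of `I`; those
below both `L` and `U` are exactly `Δ(I) \ I`; those above both are exactly
`∇(I) \ I`; and those below `L` and above `U` are exactly the elements
incomparable with every element of `I`. -/
theorem paths_in_poset_language (m n : ℕ) (P : Finset (Fin m × Fin n))
    (hPics : IsIntervalClosed P) (hPfull : IsFull m n P)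
    (I : Finset (Fin m × Fin n)) (hIP : I ⊆ P)
    (hI : ∀ x ∈ I, ∀ y ∈ I, ∀ z ∈ P, x < z → z < y → z ∈ I)
    (L U : ℕ → ℤ) (hL : IsLowerPath m n I L) (hU : IsUpperPath m n I U) :
    ∀ z ∈ P,
      (z ∈ I ↔ L (elemX z) < (elemY z : ℤ) ∧ (elemY z : ℤ) < U (elemX z)) ∧
      (((∃ x ∈ I, z ≤ x) ∧ z ∉ I) ↔
        (elemY z : ℤ) < L (elemX z) ∧ (elemY z : ℤ) < U (elemX z)) ∧
      (((∃ x ∈ I, x ≤ z) ∧ z ∉ I) ↔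
        L (elemX z) < (elemY z : ℤ) ∧ U (elemX z) < (elemY z : ℤ)) ∧
      ((∀ x ∈ I, ¬ x ≤ z ∧ ¬ z ≤ x) ↔
        (elemY z : ℤ) < L (elemX z) ∧ U (elemX z) < (elemY z : ℤ)) := by
  intro z hzP
  obtain ⟨k1, k2⟩ := keyU hU z
  obtain ⟨k3, k4⟩ := keyL hL z
  have hmem : z ∈ I ↔ (∃ e ∈ I, e ≤ z) ∧ (∃ e ∈ I, z ≤ e) := by
    constructor
    · intro h
      exact ⟨⟨z, h, le_rfl⟩, ⟨z, h, le_rfl⟩⟩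
    · rintro ⟨⟨x, hx, hxz⟩, ⟨y, hy, hzy⟩⟩
      rcases eq_or_lt_of_le hxz with rfl | hxz'
      · exact hx
      rcases eq_or_lt_of_le hzy with rfl | hzy'
      · exact hy
      exact hI x hx y hy z hzP hxz' hzy'
  refine ⟨by rw [k3, k1]; exact hmem, ?_, ?_, ?_⟩
  · rw [k4, k1]
    constructor
    · rintro ⟨hF, hnI⟩
      exact ⟨fun e he hez => hnI (hmem.mpr ⟨⟨e, he, hez⟩, hF⟩), hF⟩
    · rintro ⟨hnE, hF⟩
      exact ⟨hF, fun hzI => hnE z hzI le_rfl⟩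
  · rw [k3, k2]
    constructor
    · rintro ⟨hE, hnI⟩
      exact ⟨hE, fun e he hze => hnI (hmem.mpr ⟨hE, ⟨e, he, hze⟩⟩)⟩
    · rintro ⟨hE, hnF⟩
      exact ⟨hE, fun hzI => hnF z hzI le_rfl⟩
  · rw [k4, k2]
    constructor
    · intro h
      exact ⟨fun e he => (h e he).1, fun e he => (h e he).2⟩
    · rintro ⟨h1, h2⟩ x hx
      exact ⟨h1 x hx, h2 x hx⟩
end

section
/- There is a bijection between pairs (B, T) of nested Dyck paths of length 2n (B weakly below T, both from (0,0) to (2n,0) never going below the x-axis) and lattice walks in the first quadrant starting and ending at the origin with 2n steps from {(1,0), (−1,0), (1,−1), (−1,1)}, given by mapping the i-th step pair (bᵢ, tᵢ) to: (−1,1) if (d,u); (1,−1) if (u,d); (1,0) if (u,u); (−1,0) if (d,d). -/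
/-- Steps of a quarter-plane walk: east `(1,0)`, west `(−1,0)`,
southeast `(1,−1)`, northwest `(−1,1)`. -/
inductive QStep : Type
  | e : QStep
  | w : QStep
  | se : QStep
  | nw : QStep
  deriving DecidableEq

/-- Horizontal displacement of a step. -/
def QStep.dx : QStep → ℤ
  | .e => 1
  | .w => -1
  | .se => 1
  | .nw => -1

/-- Vertical displacement of a step. -/
def QStep.dy : QStep → ℤ
  | .se => -1
  | .nw => 1
  | _ => 0

/-- x-coordinate of the walk `W` (started at the origin) after `k` steps. -/
def walkX (W : List QStep) (k : ℕ) : ℤ := ((W.take k).map QStep.dx).sum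

/-- y-coordinate of the walk `W` after `k` steps. -/
def walkY (W : List QStep) (k : ℕ) : ℤ := ((W.take k).map QStep.dy).sum

/-- The walk stays in the first quadrant. -/
def InQuadrant (W : List QStep) : Prop :=
  ∀ k : ℕ, 0 ≤ walkX W k ∧ 0 ≤ walkY W k

/-- Height of a path of up (`true`) and down (`false`) steps after `k` steps. -/
def dyckHgt (B : List Bool) (k : ℕ) : ℤ :=
  ((B.take k).map (fun b => if b then (1 : ℤ) else -1)).sum

/-- A Dyck path: never below the x-axis, ending at height 0. -/
def IsDyck (B : List Bool) : Prop :=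
  (∀ k : ℕ, 0 ≤ dyckHgt B k) ∧ dyckHgt B B.length = 0

/-- The step of the walk determined by a pair of steps `(bᵢ, tᵢ)`:
`(d,u) ↦ nw`, `(u,d) ↦ se`, `(u,u) ↦ e`, `(d,d) ↦ w`. -/
def pairStep : Bool → Bool → QStep
  | false, true => QStep.nw
  | true, false => QStep.se
  | true, true => QStep.e
  | false, false => QStep.w

namespace NestedAux

def invB : QStep → Bool
  | .e => true
  | .w => false
  | .se => true
  | .nw => false

def invT : QStep → Bool
  | .e => true
  | .w => false
  | .se => false
  | .nw => true

lemma invB_pairStep (b t : Bool) : invB (pairStep b t) = b := by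
  cases b <;> cases t <;> rfl

lemma invT_pairStep (b t : Bool) : invT (pairStep b t) = t := by
  cases b <;> cases t <;> rfl

lemma map_invB_zip : ∀ (B T : List Bool), B.length = T.length →
    (List.zipWith pairStep B T).map invB = B
  | [], [], _ => rfl
  | [], _ :: _, h => by simp at h
  | _ :: _, [], h => by simp at h
  | b :: B, t :: T, h => by
    simp [invB_pairStep, map_invB_zip B T (by simpa using h)]

lemma map_invT_zip : ∀ (B T : List Bool), B.length = T.length →
    (List.zipWith pairStep B T).map invT = T
  | [], [], _ => rfl
  | [], _ :: _, h => by simp at h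
  | _ :: _, [], h => by simp at h
  | b :: B, t :: T, h => by
    simp [invT_pairStep, map_invT_zip B T (by simpa using h)]

lemma zip_map_inv (W : List QStep) :
    List.zipWith pairStep (W.map invB) (W.map invT) = W := by
  induction W with
  | nil => rfl
  | cons s W ih =>
    have : pairStep (invB s) (invT s) = s := by cases s <;> rfl
    simp [this, ih]

lemma sumB (l : List QStep) :
    (l.map (fun s => if invB s then (1 : ℤ) else -1)).sum = (l.map QStep.dx).sum := by
  induction l with
  | nil => rfl
  | cons s l ih =>
    simp only [List.map_cons, List.sum_cons, ih]
    cases s <;> simp [invB, QStep.dx]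

lemma sumT (l : List QStep) :
    (l.map (fun s => if invT s then (1 : ℤ) else -1)).sum =
      (l.map QStep.dx).sum + 2 * (l.map QStep.dy).sum := by
  induction l with
  | nil => rfl
  | cons s l ih =>
    simp only [List.map_cons, List.sum_cons, ih]
    cases s <;> simp [invT, QStep.dx, QStep.dy] <;> ring

lemma hgt_invB (W : List QStep) (k : ℕ) : dyckHgt (W.map invB) k = walkX W k := by
  unfold dyckHgt walkX
  rw [← List.map_take, List.map_map]
  exact sumB (W.take k)

lemma hgt_invT (W : List QStep) (k : ℕ) :
    dyckHgt (W.map invT) k = walkX W k + 2 * walkY W k := by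
  unfold dyckHgt walkX walkY
  rw [← List.map_take, List.map_map]
  exact sumT (W.take k)

end NestedAux

open NestedAux in
/-- The map sending a nested pair `(B, T)` of Dyck paths of length `2n` to the
walk whose `i`-th step is determined by `(bᵢ, tᵢ)` is a bijection onto the
first-quadrant walks of `2n` steps starting and ending at the origin. -/
theorem nested_dyck_equiv_quarter_plane_walks (n : ℕ) :
    Set.BijOn (fun p : List Bool × List Bool => List.zipWith pairStep p.1 p.2)
      {p : List Bool × List Bool | p.1.length = 2 * n ∧ p.2.length = 2 * n ∧
        IsDyck p.1 ∧ IsDyck p.2 ∧ ∀ k : ℕ, dyckHgt p.1 k ≤ dyckHgt p.2 k}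
      {W : List QStep | W.length = 2 * n ∧ InQuadrant W ∧
        walkX W W.length = 0 ∧ walkY W W.length = 0} := by
  set f := fun p : List Bool × List Bool => List.zipWith pairStep p.1 p.2 with hf
  set g := fun W : List QStep => (W.map invB, W.map invT) with hg
  apply Set.InvOn.bijOn (f' := g)
  · constructor
    · rintro ⟨B, T⟩ ⟨hB, hT, _⟩
      dsimp only at hB hT
      have hlen : B.length = T.length := by omega
      simp only [hg, hf]
      rw [map_invB_zip B T hlen, map_invT_zip B T hlen]
    · intro W _
      simp only [hg, hf, zip_map_inv]
  · rintro ⟨B, T⟩ ⟨hB, hT, ⟨hBq, hB0⟩, ⟨hTq, hT0⟩, hdom⟩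
    dsimp only at hB hT hBq hB0 hTq hT0 hdom
    have hlen : B.length = T.length := by omega
    have hWB : (f (B, T)).map invB = B := map_invB_zip B T hlen
    have hWT : (f (B, T)).map invT = T := map_invT_zip B T hlen
    set W := f (B, T) with hW
    have hx : ∀ k, walkX W k = dyckHgt B k := fun k => by
      rw [← hWB]; exact (hgt_invB W k).symm
    have hy : ∀ k, walkX W k + 2 * walkY W k = dyckHgt T k := fun k => by
      rw [← hWT]; exact (hgt_invT W k).symm
    have hWlen : W.length = 2 * n := by
      simp only [hW, hf, List.length_zipWith]; omega
    refine ⟨hWlen, ?_, ?_, ?_⟩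
    · intro k
      have h1 := hBq k
      have h2 := hdom k
      have := hx k
      have := hy k
      constructor <;> omega
    · have e1 : W.length = B.length := by omega
      rw [e1, hx]
      exact hB0
    · have e1 : W.length = B.length := by omega
      have e2 : W.length = T.length := by omega
      have h1 : walkX W W.length = 0 := by rw [e1, hx]; exact hB0
      have h2 : walkX W W.length + 2 * walkY W W.length = dyckHgt T T.length := by
        rw [e2]; exact hy T.length
      omega
  · rintro W ⟨hWlen, hQ, hx0, hy0⟩
    have hx : ∀ k, dyckHgt (W.map invB) k = walkX W k := hgt_invB W
    have hy : ∀ k, dyckHgt (W.map invT) k = walkX W k + 2 * walkY W k := hgt_invT W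
    simp only [hg, Set.mem_setOf_eq]
    refine ⟨by simpa using hWlen, by simpa using hWlen, ⟨?_, ?_⟩, ⟨?_, ?_⟩, ?_⟩
    · intro k; have := (hQ k).1; have := hx k; omega
    · rw [List.length_map, hx]; omega
    · intro k; have h1 := (hQ k).1; have h2 := (hQ k).2; have := hy k; omega
    · rw [List.length_map, hy]; omega
    · intro k; have h1 := (hQ k).2; have h2 := hx k; have h3 := hy k; omega
end

section
/- The set of interval-closed sets of the type A root poset A_{n−1} is in bijection with the set of lattice walks in the first quadrant that start and end at the origin, consist of 2n steps from {(1,0), (−1,0), (1,−1), (−1,1)}, and in which no (−1,0) step ending on the x-axis is immediately followed by a (1,0) step. -/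
/-- No west step ending on the x-axis is immediately followed by an east step. -/
def NoWThenE (W : List QStep) : Prop :=
  ∀ k : ℕ, ¬ (W[k]? = some QStep.w ∧ walkY W (k + 1) = 0 ∧
    W[k + 1]? = some QStep.e)

/-- The elements of the type `A` root poset `A_{n−1}`: intervals `[i,j]` with
`1 ≤ i ≤ j ≤ n−1`, encoded as pairs `(i,j)` with `i ≤ j`. -/
def rootLE {k : ℕ} (p q : Fin k × Fin k) : Prop := q.1 ≤ p.1 ∧ p.2 ≤ q.2

def rootLT {k : ℕ} (p q : Fin k × Fin k) : Prop := rootLE p q ∧ p ≠ q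

section WalkBasics

@[simp] lemma walkX_zero (W : List QStep) : walkX W 0 = 0 := rfl
@[simp] lemma walkY_zero (W : List QStep) : walkY W 0 = 0 := rfl

lemma walkX_succ {W : List QStep} {k : ℕ} {st : QStep} (h : W[k]? = some st) :
    walkX W (k+1) = walkX W k + st.dx := by
  unfold walkX
  rw [List.take_succ, h]
  simp

lemma walkY_succ {W : List QStep} {k : ℕ} {st : QStep} (h : W[k]? = some st) :
    walkY W (k+1) = walkY W k + st.dy := by
  unfold walkY
  rw [List.take_succ, h]
  simp

lemma walkX_succ_none {W : List QStep} {k : ℕ} (h : W[k]? = none) :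
    walkX W (k+1) = walkX W k := by
  unfold walkX
  rw [List.take_succ, h]
  simp

lemma walkY_succ_none {W : List QStep} {k : ℕ} (h : W[k]? = none) :
    walkY W (k+1) = walkY W k := by
  unfold walkY
  rw [List.take_succ, h]
  simp

lemma walkX_stab {W : List QStep} {k : ℕ} (h : W.length ≤ k) :
    walkX W k = walkX W W.length := by
  unfold walkX
  rw [List.take_of_length_le h, List.take_of_length_le le_rfl]

lemma walkY_stab {W : List QStep} {k : ℕ} (h : W.length ≤ k) :
    walkY W k = walkY W W.length := by
  unfold walkY
  rw [List.take_of_length_le h, List.take_of_length_le le_rfl]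

lemma get?_some_of_lt {W : List QStep} {k : ℕ} (h : k < W.length) :
    ∃ st, W[k]? = some st := by
  exact ⟨W.get ⟨k, h⟩, List.getElem?_eq_getElem h⟩

lemma dx_cases (st : QStep) : st.dx = 1 ∨ st.dx = -1 := by cases st <;> simp [QStep.dx]
lemma dy_cases (st : QStep) : st.dy = 1 ∨ st.dy = 0 ∨ st.dy = -1 := by
  cases st <;> simp [QStep.dy]

end WalkBasics

section WalkFacts

variable {W : List QStep}

lemma sub_X_step (W : List QStep) (s : ℕ) :
    ((s:ℤ) - walkX W s ≤ (s+1:ℕ) - walkX W (s+1)) ∧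
    ((s+1:ℕ) - walkX W (s+1) ≤ (s:ℤ) - walkX W s + 2) := by
  rcases h : W[s]? with _ | st
  · rw [walkX_succ_none h]; push_cast; omega
  · rw [walkX_succ h]; rcases dx_cases st with h1 | h1 <;> rw [h1] <;> push_cast <;> omega

lemma sub_X_mono {s t : ℕ} (h : s ≤ t) (W : List QStep) :
    (s:ℤ) - walkX W s ≤ (t:ℤ) - walkX W t := by
  have := monotone_nat_of_le_succ (f := fun s => (s:ℤ) - walkX W s)
    (fun s => by exact_mod_cast (sub_X_step W s).1) h
  exact_mod_cast this

lemma sub_XY_step (W : List QStep) (s : ℕ) :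
    ((s:ℤ) - walkX W s - 2 * walkY W s ≤ (s+1:ℕ) - walkX W (s+1) - 2 * walkY W (s+1)) ∧
    ((s+1:ℕ) - walkX W (s+1) - 2 * walkY W (s+1) ≤ (s:ℤ) - walkX W s - 2 * walkY W s + 2) := by
  rcases h : W[s]? with _ | st
  · rw [walkX_succ_none h, walkY_succ_none h]; push_cast; omega
  · rw [walkX_succ h, walkY_succ h]
    cases st <;> simp [QStep.dx, QStep.dy] <;> push_cast <;> omega

lemma sub_XY_mono {s t : ℕ} (h : s ≤ t) (W : List QStep) :
    (s:ℤ) - walkX W s - 2 * walkY W s ≤ (t:ℤ) - walkX W t - 2 * walkY W t := by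
  exact monotone_nat_of_le_succ (f := fun s => (s:ℤ) - walkX W s - 2 * walkY W s)
    (fun s => (sub_XY_step W s).1) h

lemma X_parity (W : List QStep) {s : ℕ} (hs : s ≤ W.length) :
    (2:ℤ) ∣ ((s:ℤ) - walkX W s) := by
  induction s with
  | zero => simp
  | succ s ih =>
    have hlt : s < W.length := by omega
    obtain ⟨st, h⟩ := get?_some_of_lt hlt
    have := ih (by omega)
    rw [walkX_succ h]; rcases dx_cases st with h1 | h1 <;> rw [h1] <;> push_cast <;> omega

lemma XY_le_s (W : List QStep) (s : ℕ) : walkX W s + 2 * walkY W s ≤ s := by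
  induction s with
  | zero => simp
  | succ s ih =>
    rcases h : W[s]? with _ | st
    · rw [walkX_succ_none h, walkY_succ_none h]; push_cast at ih ⊢; omega
    · rw [walkX_succ h, walkY_succ h]
      cases st <;> simp [QStep.dx, QStep.dy] <;> push_cast <;> omega

lemma XY_step_down (W : List QStep) (s : ℕ) :
    walkX W s + 2 * walkY W s ≤ walkX W (s+1) + 2 * walkY W (s+1) + 1 := by
  rcases h : W[s]? with _ | st
  · rw [walkX_succ_none h, walkY_succ_none h]; omega
  · rw [walkX_succ h, walkY_succ h]
    cases st <;> simp [QStep.dx, QStep.dy] <;> omega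

lemma XY_le_back (W : List QStep) {s t : ℕ} (h : s ≤ t) :
    walkX W s + 2 * walkY W s ≤ walkX W t + 2 * walkY W t + (t - s) := by
  induction t with
  | zero =>
    have : s = 0 := by omega
    subst this; simp
  | succ t ih =>
    rcases Nat.lt_or_ge s (t+1) with hlt | hge
    · have h2 := XY_step_down W t
      have := ih (by omega)
      push_cast at *; omega
    · have : s = t + 1 := by omega
      subst this; simp

end WalkFacts

namespace ICSW

variable (n : ℕ)

abbrev P := {p : Fin (n - 1) × Fin (n - 1) // p.1 ≤ p.2}

variable {n}

/-- left endpoint (1-indexed) of the interval represented by `e`. -/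
def iOf (e : P n) : ℕ := e.1.1.val + 1
/-- right endpoint. -/
def jOf (e : P n) : ℕ := e.1.2.val + 1
/-- diagonal. -/
def sOf (e : P n) : ℕ := iOf e + jOf e

lemma iOf_le_jOf (e : P n) : iOf e ≤ jOf e := by
  have := e.2; rw [Fin.le_def] at this; unfold iOf jOf; omega

lemma jOf_le (e : P n) : jOf e ≤ n - 1 := by
  have := e.1.2.isLt; unfold jOf; omega

lemma one_le_iOf (e : P n) : 1 ≤ iOf e := Nat.le_add_left 1 _

lemma sOf_le (e : P n) : sOf e ≤ 2*n - 2 := by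
  have h1 := iOf_le_jOf e; have h2 := jOf_le e
  have h3 := e.1.2.isLt; unfold sOf at *; omega

/-- the element with given data. -/
def mkE (i j : ℕ) (h1 : 1 ≤ i) (h2 : i ≤ j) (h3 : j ≤ n - 1) : P n :=
  ⟨(⟨i - 1, by omega⟩, ⟨j - 1, by omega⟩), by rw [Fin.le_def]; simp; omega⟩

@[simp] lemma iOf_mkE (i j h1 h2 h3) : iOf (n := n) (mkE i j h1 h2 h3) = i := by
  unfold iOf mkE; simp; omega

@[simp] lemma jOf_mkE (i j h1 h2 h3) : jOf (n := n) (mkE i j h1 h2 h3) = j := by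
  unfold jOf mkE; simp; omega

lemma sOf_mkE (i j h1 h2 h3) : sOf (n := n) (mkE i j h1 h2 h3) = i + j := by
  unfold sOf; rw [iOf_mkE, jOf_mkE]

lemma eq_of_iOf_jOf {e f : P n} (h1 : iOf e = iOf f) (h2 : jOf e = jOf f) : e = f := by
  unfold iOf jOf at *
  apply Subtype.ext
  apply Prod.ext <;> · apply Fin.ext; omega

/-- convexity of an interval-closed set. -/
def Cvx (I : Finset (P n)) : Prop :=
  ∀ x ∈ I, ∀ y ∈ I, ∀ z : P n, rootLT x.1 z.1 → rootLT z.1 y.1 → z ∈ I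

/-- convexity, in terms of endpoints: `x ⊆ z ⊆ y`. -/
lemma Cvx.mid {I : Finset (P n)} (hI : Cvx I) {x y z : P n}
    (hx : x ∈ I) (hy : y ∈ I)
    (h1 : iOf z ≤ iOf x) (h2 : jOf x ≤ jOf z)
    (h3 : iOf y ≤ iOf z) (h4 : jOf z ≤ jOf y)
    (hzx : ¬(iOf z = iOf x ∧ jOf z = jOf x))
    (hzy : ¬(iOf z = iOf y ∧ jOf z = jOf y)) : z ∈ I := by
  apply hI x hx y hy z
  · constructor
    · constructor <;> [skip; skip] <;>
        · rw [Fin.le_def]; unfold iOf jOf at *; omega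
    · intro hc
      apply hzx
      unfold iOf jOf; rw [hc]; exact ⟨rfl, rfl⟩
  · constructor
    · constructor <;>
        · rw [Fin.le_def]; unfold iOf jOf at *; omega
    · intro hc
      apply hzy
      unfold iOf jOf; rw [hc]; exact ⟨rfl, rfl⟩

variable (n) in
/-- the slice of `I` on diagonal `s`: set of left endpoints. -/
def sliceF (I : Finset (P n)) (s : ℕ) : Finset ℕ :=
  (I.filter (fun e => sOf e = s)).image iOf

lemma mem_sliceF {I : Finset (P n)} {i s : ℕ} :
    i ∈ sliceF n I s ↔ ∃ e ∈ I, sOf e = s ∧ iOf e = i := by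
  unfold sliceF
  simp only [Finset.mem_image, Finset.mem_filter]
  constructor
  · rintro ⟨e, ⟨he, hs⟩, hi⟩; exact ⟨e, he, hs, hi⟩
  · rintro ⟨e, he, hs, hi⟩; exact ⟨e, ⟨he, hs⟩, hi⟩

lemma sliceF_mem_bounds {I : Finset (P n)} {i s : ℕ} (h : i ∈ sliceF n I s) :
    1 ≤ i ∧ 2*i ≤ s ∧ s ≤ n - 1 + i ∧ s ≤ 2*n-2 := by
  rw [mem_sliceF] at h
  obtain ⟨e, _, hs, hi⟩ := h
  have h1 := iOf_le_jOf e; have h2 := jOf_le e; have h3 := one_le_iOf e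
  have h4 := sOf_le e
  unfold sOf at hs; omega

variable (n) in
def AF (I : Finset (P n)) (s : ℕ) : ℕ :=
  if h : (sliceF n I s).Nonempty then (sliceF n I s).max' h else 0

variable (n) in
def BF (I : Finset (P n)) (s : ℕ) : ℕ :=
  if h : (sliceF n I s).Nonempty then (sliceF n I s).min' h else 0

variable (n) in
def cF (I : Finset (P n)) (s : ℕ) : ℕ := (sliceF n I s).card

variable (n) in
def qF (I : Finset (P n)) (s : ℕ) : ℕ :=
  max (s - n) ((Finset.range (2*n+1)).sup (fun t =>
    if (sliceF n I t).Nonempty then (if t ≤ s then AF n I t else (BF n I t + s) - t) else 0))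

variable (n) in
def stepOf (I : Finset (P n)) (t : ℕ) : QStep :=
  if qF n I (t+1) = qF n I t then (if cF n I (t+1) = cF n I t then .e else .se)
  else (if cF n I (t+1) = cF n I t then .w else .nw)

variable (n) in
def encode (I : Finset (P n)) : List QStep := (List.range (2*n)).map (stepOf n I)

variable (n) in
def decode (W : List QStep) : Finset (P n) :=
  Finset.univ.filter (fun e =>
    ((sOf e : ℤ) - walkX W (sOf e) - 2 * walkY W (sOf e) < 2 * (iOf e)) ∧
    ((2 * (iOf e) : ℤ) ≤ (sOf e : ℤ) - walkX W (sOf e)))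

variable (n) in
def ValidW (W : List QStep) : Prop :=
  W.length = 2 * n ∧ InQuadrant W ∧
    walkX W W.length = 0 ∧ walkY W W.length = 0 ∧ NoWThenE W

section SliceLemmas

variable {n : ℕ} {I : Finset (P n)}

lemma mem_sliceF_of {e : P n} (he : e ∈ I) : iOf e ∈ sliceF n I (sOf e) :=
  mem_sliceF.2 ⟨e, he, rfl, rfl⟩

lemma AF_mem (h : (sliceF n I s).Nonempty) : AF n I s ∈ sliceF n I s := by
  rw [AF, dif_pos h]; exact (sliceF n I s).max'_mem h

lemma BF_mem (h : (sliceF n I s).Nonempty) : BF n I s ∈ sliceF n I s := by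
  rw [BF, dif_pos h]; exact (sliceF n I s).min'_mem h

lemma le_AF {i : ℕ} (hi : i ∈ sliceF n I s) : i ≤ AF n I s := by
  rw [AF, dif_pos ⟨i, hi⟩]; exact Finset.le_max' _ _ hi

lemma BF_le {i : ℕ} (hi : i ∈ sliceF n I s) : BF n I s ≤ i := by
  rw [BF, dif_pos ⟨i, hi⟩]; exact Finset.min'_le _ _ hi

lemma BF_le_AF (h : (sliceF n I s).Nonempty) : BF n I s ≤ AF n I s :=
  le_AF (BF_mem h)

lemma AF_bounds (h : (sliceF n I s).Nonempty) :
    1 ≤ AF n I s ∧ 2 * AF n I s ≤ s ∧ s ≤ n - 1 + AF n I s ∧ s ≤ 2*n-2 :=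
  sliceF_mem_bounds (AF_mem h)

lemma BF_bounds (h : (sliceF n I s).Nonempty) :
    1 ≤ BF n I s ∧ 2 * BF n I s ≤ s ∧ s ≤ n - 1 + BF n I s ∧ s ≤ 2*n-2 :=
  sliceF_mem_bounds (BF_mem h)

/-- S1: slices are intervals. -/
lemma slice_interval (hI : Cvx I) {s i1 i2 i : ℕ}
    (h1 : i1 ∈ sliceF n I s) (h2 : i2 ∈ sliceF n I s)
    (hle1 : i1 ≤ i) (hle2 : i ≤ i2) : i ∈ sliceF n I s := by
  rcases eq_or_lt_of_le hle1 with rfl | hlt1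
  · exact h1
  rcases eq_or_lt_of_le hle2 with rfl | hlt2
  · exact h2
  obtain ⟨e1, he1, hs1, hi1⟩ := mem_sliceF.1 h1
  obtain ⟨e2, he2, hs2, hi2⟩ := mem_sliceF.1 h2
  have b1 := sliceF_mem_bounds h1
  have b2 := sliceF_mem_bounds h2
  have hj1 : jOf e1 = s - i1 := by unfold sOf at hs1; omega
  have hj2 : jOf e2 = s - i2 := by unfold sOf at hs2; omega
  have hz : mkE (n := n) i (s - i) (by omega) (by omega) (by omega) ∈ I := by
    apply hI.mid he2 he1 <;> simp [hi1, hi2, hj1, hj2] <;> omega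
  have := mem_sliceF_of hz
  rwa [iOf_mkE, sOf_mkE, Nat.add_sub_cancel' (by omega)] at this

/-- S2: A is monotone (globally). -/
lemma AF_mono (hI : Cvx I) {t s : ℕ} (hts : t ≤ s)
    (ht : (sliceF n I t).Nonempty) (hs : (sliceF n I s).Nonempty) :
    AF n I t ≤ AF n I s := by
  rcases eq_or_lt_of_le hts with rfl | hlt
  · exact le_rfl
  set a := AF n I t with ha
  rcases le_or_gt a (BF n I s) with hab | hab
  · exact le_trans hab (BF_le_AF hs)
  obtain ⟨e1, he1, hs1, hi1⟩ := mem_sliceF.1 (AF_mem ht)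
  obtain ⟨e2, he2, hs2, hi2⟩ := mem_sliceF.1 (BF_mem hs)
  have b1 := sliceF_mem_bounds (AF_mem ht)
  have b2 := sliceF_mem_bounds (BF_mem hs)
  have hj1 : jOf e1 = t - a := by unfold sOf at hs1; omega
  have hj2 : jOf e2 = s - BF n I s := by unfold sOf at hs2; omega
  have hz : mkE (n := n) a (s - a) (by omega) (by omega) (by omega) ∈ I := by
    apply hI.mid he1 he2 <;> simp [hi1, hi2, hj1, hj2] <;> omega
  have := mem_sliceF_of hz
  rw [iOf_mkE, sOf_mkE, Nat.add_sub_cancel' (by omega)] at this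
  exact le_AF this

/-- S3: B is 1-Lipschitz upwards (globally). -/
lemma BF_lip (hI : Cvx I) {s t : ℕ} (hst : s < t)
    (hs : (sliceF n I s).Nonempty) (ht : (sliceF n I t).Nonempty) :
    BF n I t ≤ BF n I s + (t - s) := by
  by_contra hc
  push_neg at hc
  obtain ⟨ey, hey, hsy, hiy⟩ := mem_sliceF.1 (BF_mem ht)
  obtain ⟨ey', hey', hsy', hiy'⟩ := mem_sliceF.1 (BF_mem hs)
  have b1 := sliceF_mem_bounds (BF_mem ht)
  have b2 := sliceF_mem_bounds (BF_mem hs)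
  have hjy : jOf ey = t - BF n I t := by unfold sOf at hsy; omega
  have hjy' : jOf ey' = s - BF n I s := by unfold sOf at hsy'; omega
  have hz : mkE (n := n) (BF n I s + (t - s)) (s - BF n I s)
      (by omega) (by omega) (by omega) ∈ I := by
    apply hI.mid hey hey' <;> simp [hiy, hiy', hjy, hjy'] <;> omega
  have := mem_sliceF_of hz
  rw [iOf_mkE, sOf_mkE] at this
  have hd : BF n I s + (t - s) + (s - BF n I s) = t := by omega
  rw [hd] at this
  have := BF_le this
  omega

/-- S4: B is monotone between adjacent nonempty slices. -/
lemma BF_mono_adj (hI : Cvx I) {s : ℕ}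
    (hs : (sliceF n I s).Nonempty) (hs1 : (sliceF n I (s+1)).Nonempty) :
    BF n I s ≤ BF n I (s+1) := by
  by_contra hc
  push_neg at hc
  obtain ⟨ex, hex, hsx, hix⟩ := mem_sliceF.1 (BF_mem hs)
  obtain ⟨ey, hey, hsy, hiy⟩ := mem_sliceF.1 (BF_mem hs1)
  have b1 := sliceF_mem_bounds (BF_mem hs)
  have b2 := sliceF_mem_bounds (BF_mem hs1)
  have hjx : jOf ex = s - BF n I s := by unfold sOf at hsx; omega
  have hjy : jOf ey = s + 1 - BF n I (s+1) := by unfold sOf at hsy; omega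
  have hz : mkE (n := n) (BF n I (s+1)) (s - BF n I (s+1))
      (by omega) (by omega) (by omega) ∈ I := by
    apply hI.mid hex hey <;> simp [hix, hiy, hjx, hjy] <;> omega
  have := mem_sliceF_of hz
  rw [iOf_mkE, sOf_mkE, Nat.add_sub_cancel' (by omega)] at this
  have := BF_le this
  omega

/-- S5: A is 1-Lipschitz between adjacent nonempty slices. -/
lemma AF_lip_adj (hI : Cvx I) {s : ℕ}
    (hs : (sliceF n I s).Nonempty) (hs1 : (sliceF n I (s+1)).Nonempty) :
    AF n I (s+1) ≤ AF n I s + 1 := by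
  by_contra hc
  push_neg at hc
  obtain ⟨ex, hex, hsx, hix⟩ := mem_sliceF.1 (AF_mem hs1)
  obtain ⟨ey, hey, hsy, hiy⟩ := mem_sliceF.1 (BF_mem hs)
  have b1 := sliceF_mem_bounds (AF_mem hs1)
  have b2 := sliceF_mem_bounds (BF_mem hs)
  have hBA := BF_le_AF hs
  have hjx : jOf ex = s + 1 - AF n I (s+1) := by unfold sOf at hsx; omega
  have hjy : jOf ey = s - BF n I s := by unfold sOf at hsy; omega
  have hz : mkE (n := n) (AF n I (s+1) - 1) (s - (AF n I (s+1) - 1))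
      (by omega) (by omega) (by omega) ∈ I := by
    apply hI.mid hex hey <;> simp [hix, hiy, hjx, hjy] <;> omega
  have := mem_sliceF_of hz
  rw [iOf_mkE, sOf_mkE, Nat.add_sub_cancel' (by omega)] at this
  have := le_AF this
  omega

/-- S6: a slice following an empty slice is a singleton. -/
lemma AF_eq_BF_of_empty_prev (hI : Cvx I) {s : ℕ}
    (hs : ¬ (sliceF n I s).Nonempty) (hs1 : (sliceF n I (s+1)).Nonempty) :
    AF n I (s+1) = BF n I (s+1) := by
  by_contra hc
  have hBA := BF_le_AF hs1
  have hlt : BF n I (s+1) < AF n I (s+1) := by omega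
  have hmem : AF n I (s+1) - 1 ∈ sliceF n I (s+1) :=
    slice_interval hI (BF_mem hs1) (AF_mem hs1) (by omega) (by omega)
  obtain ⟨ex, hex, hsx, hix⟩ := mem_sliceF.1 (AF_mem hs1)
  obtain ⟨ey, hey, hsy, hiy⟩ := mem_sliceF.1 hmem
  have b1 := sliceF_mem_bounds (AF_mem hs1)
  have b2 := sliceF_mem_bounds hmem
  have hjx : jOf ex = s + 1 - AF n I (s+1) := by unfold sOf at hsx; omega
  have hjy : jOf ey = s + 2 - AF n I (s+1) := by unfold sOf at hsy; omega
  have hz : mkE (n := n) (AF n I (s+1) - 1) (s + 1 - AF n I (s+1))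
      (by omega) (by omega) (by omega) ∈ I := by
    apply hI.mid hex hey <;> simp [hix, hiy, hjx, hjy] <;> omega
  have := mem_sliceF_of hz
  rw [iOf_mkE, sOf_mkE] at this
  have hd : AF n I (s+1) - 1 + (s + 1 - AF n I (s+1)) = s := by omega
  rw [hd] at this
  exact hs ⟨_, this⟩

/-- S7: a slice followed by an empty slice is a singleton. -/
lemma AF_eq_BF_of_empty_next (hI : Cvx I) {s : ℕ}
    (hs : (sliceF n I s).Nonempty) (hs1 : ¬ (sliceF n I (s+1)).Nonempty) :
    AF n I s = BF n I s := by
  by_contra hc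
  have hBA := BF_le_AF hs
  have hlt : BF n I s < AF n I s := by omega
  have hmem : AF n I s - 1 ∈ sliceF n I s :=
    slice_interval hI (BF_mem hs) (AF_mem hs) (by omega) (by omega)
  obtain ⟨ex, hex, hsx, hix⟩ := mem_sliceF.1 (AF_mem hs)
  obtain ⟨ey, hey, hsy, hiy⟩ := mem_sliceF.1 hmem
  have b1 := sliceF_mem_bounds (AF_mem hs)
  have b2 := sliceF_mem_bounds hmem
  have hjx : jOf ex = s - AF n I s := by unfold sOf at hsx; omega
  have hjy : jOf ey = s + 1 - AF n I s := by unfold sOf at hsy; omega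
  have hz : mkE (n := n) (AF n I s) (s + 1 - AF n I s)
      (by omega) (by omega) (by omega) ∈ I := by
    apply hI.mid hex hey <;> simp [hix, hiy, hjx, hjy] <;> omega
  have := mem_sliceF_of hz
  rw [iOf_mkE, sOf_mkE, Nat.add_sub_cancel' (by omega)] at this
  exact hs1 ⟨_, this⟩

/-- S8: everything before an empty slice lies strictly left of a later run start. -/
lemma AF_lt_BF_gap (hI : Cvx I) {t s : ℕ} (hts : t ≤ s)
    (ht : (sliceF n I t).Nonempty)
    (hs : ¬ (sliceF n I s).Nonempty) (hs1 : (sliceF n I (s+1)).Nonempty) :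
    AF n I t < BF n I (s+1) := by
  have htlt : t < s := by
    rcases eq_or_lt_of_le hts with rfl | h
    · exact absurd ht hs
    · exact h
  by_contra hc
  push_neg at hc
  obtain ⟨ex, hex, hsx, hix⟩ := mem_sliceF.1 (AF_mem ht)
  obtain ⟨ey, hey, hsy, hiy⟩ := mem_sliceF.1 (BF_mem hs1)
  have b1 := sliceF_mem_bounds (AF_mem ht)
  have b2 := sliceF_mem_bounds (BF_mem hs1)
  have hjx : jOf ex = t - AF n I t := by unfold sOf at hsx; omega
  have hjy : jOf ey = s + 1 - BF n I (s+1) := by unfold sOf at hsy; omega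
  have hz : mkE (n := n) (AF n I t) (s - AF n I t)
      (by omega) (by omega) (by omega) ∈ I := by
    apply hI.mid hex hey <;> simp [hix, hiy, hjx, hjy] <;> omega
  have := mem_sliceF_of hz
  rw [iOf_mkE, sOf_mkE, Nat.add_sub_cancel' (by omega)] at this
  exact hs ⟨_, this⟩

/-- S9: ramp bound inside: a later B cannot exceed an earlier A by more than the gap. -/
lemma BF_ramp_le_AF (hI : Cvx I) {s t : ℕ} (hst : s < t)
    (hs : (sliceF n I s).Nonempty) (ht : (sliceF n I t).Nonempty) :
    BF n I t + s ≤ AF n I s + t := by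
  by_contra hc
  push_neg at hc
  obtain ⟨ex, hex, hsx, hix⟩ := mem_sliceF.1 (BF_mem ht)
  obtain ⟨ey, hey, hsy, hiy⟩ := mem_sliceF.1 (AF_mem hs)
  have b1 := sliceF_mem_bounds (BF_mem ht)
  have b2 := sliceF_mem_bounds (AF_mem hs)
  have hjx : jOf ex = t - BF n I t := by unfold sOf at hsx; omega
  have hjy : jOf ey = s - AF n I s := by unfold sOf at hsy; omega
  have hz : mkE (n := n) (BF n I t - (t - s)) (t - BF n I t)
      (by omega) (by omega) (by omega) ∈ I := by
    apply hI.mid hex hey <;> simp [hix, hiy, hjx, hjy] <;> omega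
  have := mem_sliceF_of hz
  rw [iOf_mkE, sOf_mkE] at this
  have hd : BF n I t - (t - s) + (t - BF n I t) = s := by omega
  rw [hd] at this
  have := le_AF this
  omega

/-- S3': strict Lipschitz for B across a gap after a singleton slice. -/
lemma BF_lip_strict (hI : Cvx I) {s t : ℕ} (hst : s + 2 ≤ t)
    (hs : (sliceF n I s).Nonempty) (hAB : AF n I s = BF n I s)
    (hs1 : ¬ (sliceF n I (s+1)).Nonempty) (ht : (sliceF n I t).Nonempty) :
    BF n I t + s + 1 ≤ BF n I s + t := by
  by_contra hc
  push_neg at hc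
  obtain ⟨ex, hex, hsx, hix⟩ := mem_sliceF.1 (BF_mem ht)
  obtain ⟨ey, hey, hsy, hiy⟩ := mem_sliceF.1 (BF_mem hs)
  have b1 := sliceF_mem_bounds (BF_mem ht)
  have b2 := sliceF_mem_bounds (BF_mem hs)
  have hjx : jOf ex = t - BF n I t := by unfold sOf at hsx; omega
  have hjy : jOf ey = s - BF n I s := by unfold sOf at hsy; omega
  have hz : mkE (n := n) (BF n I s + 1) (s - BF n I s)
      (by omega) (by omega) (by omega) ∈ I := by
    apply hI.mid hex hey <;> simp [hix, hiy, hjx, hjy] <;> omega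
  have := mem_sliceF_of hz
  rw [iOf_mkE, sOf_mkE] at this
  have hd : BF n I s + 1 + (s - BF n I s) = s + 1 := by omega
  rw [hd] at this
  exact hs1 ⟨_, this⟩

/-- slices are the intervals `[BF, AF]`. -/
lemma sliceF_eq_Icc (hI : Cvx I) (h : (sliceF n I s).Nonempty) :
    sliceF n I s = Finset.Icc (BF n I s) (AF n I s) := by
  ext i
  rw [Finset.mem_Icc]
  constructor
  · intro hi; exact ⟨BF_le hi, le_AF hi⟩
  · rintro ⟨h1, h2⟩; exact slice_interval hI (BF_mem h) (AF_mem h) h1 h2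

lemma cF_eq (hI : Cvx I) (h : (sliceF n I s).Nonempty) :
    cF n I s = AF n I s - BF n I s + 1 := by
  rw [cF, sliceF_eq_Icc hI h, Nat.card_Icc]
  have := BF_le_AF h
  omega

lemma cF_eq_zero (h : ¬ (sliceF n I s).Nonempty) : cF n I s = 0 := by
  rw [cF, Finset.card_eq_zero, ← Finset.not_nonempty_iff_eq_empty]
  exact h

end SliceLemmas

section QLemmas

variable {n : ℕ} {I : Finset (P n)} {s t : ℕ}

lemma slice_diag_bounds (h : (sliceF n I s).Nonempty) : 2 ≤ s ∧ s ≤ 2*n - 2 ∧ 2 ≤ n := by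
  obtain ⟨i, hi⟩ := h
  have := sliceF_mem_bounds hi
  omega

lemma sub_le_qF : s - n ≤ qF n I s := le_max_left _ _

lemma le_qF_A (ht2n : t ≤ 2*n) (hne : (sliceF n I t).Nonempty) (hts : t ≤ s) :
    AF n I t ≤ qF n I s := by
  refine le_trans ?_ (le_max_right _ _)
  have : t ∈ Finset.range (2*n+1) := Finset.mem_range.2 (by omega)
  refine le_trans ?_ (Finset.le_sup this)
  rw [if_pos hne, if_pos hts]

lemma le_qF_B (ht2n : t ≤ 2*n) (hne : (sliceF n I t).Nonempty) (hts : s < t) :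
    BF n I t + s - t ≤ qF n I s := by
  refine le_trans ?_ (le_max_right _ _)
  have : t ∈ Finset.range (2*n+1) := Finset.mem_range.2 (by omega)
  refine le_trans ?_ (Finset.le_sup this)
  rw [if_pos hne, if_neg (by omega)]

lemma qF_le {m : ℕ} (h1 : s - n ≤ m)
    (h2 : ∀ t, t ≤ 2*n → (sliceF n I t).Nonempty →
      (if t ≤ s then AF n I t else BF n I t + s - t) ≤ m) :
    qF n I s ≤ m := by
  apply max_le h1
  apply Finset.sup_le
  intro t ht
  rw [Finset.mem_range] at ht
  by_cases hne : (sliceF n I t).Nonempty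
  · rw [if_pos hne]; exact h2 t (by omega) hne
  · rw [if_neg hne]; omega

/-- KEY: on a nonempty slice, `qF` equals the top of the slice. -/
lemma qF_eq_AF (hI : Cvx I) (hs : (sliceF n I s).Nonempty) : qF n I s = AF n I s := by
  have hd := slice_diag_bounds hs
  apply le_antisymm
  · apply qF_le
    · have := BF_bounds hs
      have := BF_le_AF hs
      omega
    · intro t ht2n hne
      split_ifs with hts
      · exact AF_mono hI hts hne hs
      · have := BF_ramp_le_AF hI (by omega) hs hne
        omega
  · exact le_qF_A (by omega) hs le_rfl

lemma two_qF_le (hs : s ≤ 2*n) : 2 * qF n I s ≤ s := by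
  rcases Nat.eq_zero_or_pos (qF n I s) with h | h
  · omega
  rw [qF] at h ⊢
  rcases le_total (s - n) ((Finset.range (2*n+1)).sup (fun t =>
      if (sliceF n I t).Nonempty then (if t ≤ s then AF n I t else BF n I t + s - t) else 0))
    with he | he
  · rw [max_eq_right he] at h ⊢
    obtain ⟨t, ht, hat⟩ := Finset.exists_mem_eq_sup (Finset.range (2*n+1))
      ⟨0, Finset.mem_range.2 (by omega)⟩ (fun t =>
        if (sliceF n I t).Nonempty then (if t ≤ s then AF n I t else BF n I t + s - t) else 0)
    rw [hat] at h ⊢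
    by_cases hne : (sliceF n I t).Nonempty
    · rw [if_pos hne] at h ⊢
      have hb := sliceF_mem_bounds (AF_mem hne)
      have hb2 := sliceF_mem_bounds (BF_mem hne)
      split_ifs at h ⊢ with hts <;> omega
    · rw [if_neg hne] at h; omega
  · rw [max_eq_left he] at h ⊢; omega

lemma qF_mono : qF n I s ≤ qF n I (s+1) := by
  apply qF_le
  · have := sub_le_qF (n := n) (I := I) (s := s+1); omega
  · intro t ht2n hne
    split_ifs with hts
    · exact le_qF_A ht2n hne (by omega)
    · rcases Nat.lt_or_ge (s+1) t with h | h
      · have := le_qF_B (s := s+1) ht2n hne h; omega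
      · have hts1 : t = s + 1 := by omega
        subst hts1
        have := le_qF_A (s := s+1) ht2n hne le_rfl
        have := BF_le_AF hne
        omega

lemma qF_lip (hI : Cvx I) : qF n I (s+1) ≤ qF n I s + 1 := by
  apply qF_le
  · have := sub_le_qF (n := n) (I := I) (s := s); omega
  · intro t ht2n hne
    split_ifs with hts
    · rcases Nat.lt_or_ge s t with h | h
      · have hts1 : t = s + 1 := by omega
        subst hts1
        by_cases hsne : (sliceF n I s).Nonempty
        · have h5 := AF_lip_adj hI hsne hne
          have := le_qF_A (t := s) (s := s) (by omega) hsne le_rfl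
          omega
        · have h6 := AF_eq_BF_of_empty_prev hI hsne hne
          have := le_qF_B (t := s+1) (s := s) ht2n hne (by omega)
          have := BF_bounds hne
          omega
      · have := le_qF_A (s := s) ht2n hne h; omega
    · have := le_qF_B (s := s) ht2n hne (by omega)
      have := BF_bounds hne
      omega

lemma qF_zero : qF n I 0 = 0 := by
  apply Nat.le_antisymm _ (Nat.zero_le _)
  apply qF_le
  · omega
  · intro t ht2n hne
    have hb := BF_bounds hne
    have hd := slice_diag_bounds hne
    split_ifs with hts
    · have : t = 0 := by omega
      omega
    · omega

lemma qF_final : qF n I (2*n) = n := by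
  apply Nat.le_antisymm
  · apply qF_le
    · omega
    · intro t ht2n hne
      have hb := AF_bounds hne
      rw [if_pos (by omega)]
      omega
  · have := sub_le_qF (n := n) (I := I) (s := 2*n); omega

lemma slice_empty_late (hs : 2*n - 1 ≤ s) : ¬ (sliceF n I s).Nonempty := by
  intro h
  have := slice_diag_bounds h
  omega

/-- coupling, part 1: `q − c` is monotone. -/
lemma qc_mono (hI : Cvx I) : qF n I s + cF n I (s+1) ≤ qF n I (s+1) + cF n I s := by
  by_cases h1 : (sliceF n I s).Nonempty <;> by_cases h2 : (sliceF n I (s+1)).Nonempty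
  · -- both nonempty
    rw [cF_eq hI h1, cF_eq hI h2, qF_eq_AF hI h1, qF_eq_AF hI h2]
    have := BF_mono_adj hI h1 h2
    have := BF_le_AF h1
    have := BF_le_AF h2
    omega
  · rw [cF_eq_zero h2, cF_eq hI h1, qF_eq_AF hI h1]
    have h7 := AF_eq_BF_of_empty_next hI h1 h2
    have hd := slice_diag_bounds h1
    -- need : AF s + 1 ≤ qF (s+1) + 1, i.e. AF s ≤ qF (s+1)
    have := le_qF_A (s := s+1) (t := s) (by omega) h1 (by omega)
    omega
  · -- s empty, s+1 nonempty: need qF s + 1 ≤ qF (s+1) = AF (s+1) = BF (s+1)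
    rw [cF_eq_zero h1, cF_eq hI h2, qF_eq_AF hI h2]
    have h6 := AF_eq_BF_of_empty_prev hI h1 h2
    have hq : qF n I s + 1 ≤ BF n I (s+1) := by
      have hd := slice_diag_bounds h2
      have hb := BF_bounds h2
      apply Nat.add_le_of_le_sub (by omega)
      apply qF_le
      · omega
      · intro t ht2n hne
        split_ifs with hts
        · have := AF_lt_BF_gap hI hts hne h1 h2
          omega
        · rcases Nat.lt_or_ge (s+1) t with h | h
          · have := BF_lip hI (t := t) (s := s+1) h h2 hne
            omega
          · have : t = s + 1 := by omega
            subst this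
            have := BF_bounds hne
            omega
    omega
  · rw [cF_eq_zero h1, cF_eq_zero h2]
    have := qF_mono (n := n) (I := I) (s := s)
    omega

/-- coupling, part 2: `q − c` is 1-Lipschitz. -/
lemma qc_lip (hI : Cvx I) : qF n I (s+1) + cF n I s ≤ qF n I s + cF n I (s+1) + 1 := by
  by_cases h1 : (sliceF n I s).Nonempty <;> by_cases h2 : (sliceF n I (s+1)).Nonempty
  · rw [cF_eq hI h1, cF_eq hI h2, qF_eq_AF hI h1, qF_eq_AF hI h2]
    have := BF_lip hI (s := s) (t := s+1) (by omega) h1 h2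
    have := BF_le_AF h1
    have := BF_le_AF h2
    omega
  · -- s nonempty, s+1 empty : need qF (s+1) + 1 ≤ qF s + 1, i.e. qF (s+1) ≤ AF s
    rw [cF_eq_zero h2, cF_eq hI h1, qF_eq_AF hI h1]
    have h7 := AF_eq_BF_of_empty_next hI h1 h2
    have hd := slice_diag_bounds h1
    have hb := AF_bounds h1
    have hq : qF n I (s+1) ≤ AF n I s := by
      apply qF_le
      · omega
      · intro t ht2n hne
        split_ifs with hts
        · have hts' : t ≤ s := by
            rcases Nat.lt_or_ge t (s+1) with h | h
            · omega
            · have : t = s+1 := by omega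
              subst this; exact absurd hne h2
          exact AF_mono hI hts' hne h1
        · have := BF_lip_strict hI (t := t) (s := s) (by omega) h1 h7 h2 hne
          have := BF_le_AF h1
          omega
    have := BF_le_AF h1
    omega
  · rw [cF_eq_zero h1, cF_eq hI h2]
    have h6 := AF_eq_BF_of_empty_prev hI h1 h2
    have := qF_lip (s := s) hI
    omega
  · rw [cF_eq_zero h1, cF_eq_zero h2]
    have := qF_lip (s := s) hI
    omega

end QLemmas

section EncodeLemmas

variable {n : ℕ} {I : Finset (P n)}

lemma delta_cases (hI : Cvx I) (t : ℕ) :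
    (qF n I (t+1) = qF n I t ∧ cF n I (t+1) = cF n I t) ∨
    (qF n I (t+1) = qF n I t ∧ cF n I (t+1) + 1 = cF n I t) ∨
    (qF n I (t+1) = qF n I t + 1 ∧ cF n I (t+1) = cF n I t) ∨
    (qF n I (t+1) = qF n I t + 1 ∧ cF n I (t+1) = cF n I t + 1) := by
  have h1 := qF_mono (n := n) (I := I) (s := t)
  have h2 := qF_lip (s := t) hI
  have h3 := qc_mono (s := t) hI
  have h4 := qc_lip (s := t) hI
  omega

lemma encode_get {t : ℕ} (ht : t < 2*n) :
    (encode n I)[t]? = some (stepOf n I t) := by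
  unfold encode
  rw [List.getElem?_map, List.getElem?_range ht]
  rfl

lemma stepOf_cases (hI : Cvx I) (t : ℕ) :
    (stepOf n I t = QStep.e ∧ qF n I (t+1) = qF n I t ∧ cF n I (t+1) = cF n I t) ∨
    (stepOf n I t = QStep.se ∧ qF n I (t+1) = qF n I t ∧ cF n I (t+1) + 1 = cF n I t) ∨
    (stepOf n I t = QStep.w ∧ qF n I (t+1) = qF n I t + 1 ∧ cF n I (t+1) = cF n I t) ∨
    (stepOf n I t = QStep.nw ∧ qF n I (t+1) = qF n I t + 1 ∧ cF n I (t+1) = cF n I t + 1) := by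
  rcases delta_cases hI t with ⟨h1, h2⟩ | ⟨h1, h2⟩ | ⟨h1, h2⟩ | ⟨h1, h2⟩
  · exact Or.inl ⟨by unfold stepOf; rw [if_pos h1, if_pos h2], h1, h2⟩
  · exact Or.inr (Or.inl ⟨by unfold stepOf; rw [if_pos h1, if_neg (by omega)], h1, h2⟩)
  · exact Or.inr (Or.inr (Or.inl ⟨by unfold stepOf; rw [if_neg (by omega), if_pos h2], h1, h2⟩))
  · exact Or.inr (Or.inr (Or.inr ⟨by unfold stepOf; rw [if_neg (by omega), if_neg (by omega)], h1, h2⟩))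

@[simp] lemma encode_length : (encode n I).length = 2*n := by
  unfold encode; simp

lemma cF_zero_iff : cF n I s = 0 ↔ ¬ (sliceF n I s).Nonempty := by
  unfold cF
  rw [Finset.card_eq_zero, ← Finset.not_nonempty_iff_eq_empty]

lemma encode_XY (hI : Cvx I) (s : ℕ) (hs : s ≤ 2*n) :
    walkX (encode n I) s = (s : ℤ) - 2 * qF n I s ∧
    walkY (encode n I) s = cF n I s := by
  induction s with
  | zero =>
    rw [qF_zero]
    have : cF n I 0 = 0 := by
      rw [cF_zero_iff]
      intro h; have := slice_diag_bounds h; omega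
    rw [this]; simp
  | succ s ih =>
    obtain ⟨ihx, ihy⟩ := ih (by omega)
    have hget := encode_get (n := n) (I := I) (t := s) (by omega)
    rw [walkX_succ hget, walkY_succ hget, ihx, ihy]
    rcases stepOf_cases hI s with ⟨hst, h1, h2⟩ | ⟨hst, h1, h2⟩ | ⟨hst, h1, h2⟩ | ⟨hst, h1, h2⟩ <;>
      rw [hst, h1] <;> (try rw [h2]) <;>
      constructor <;> simp [QStep.dx, QStep.dy] <;> push_cast <;> omega

lemma encode_valid (hI : Cvx I) : ValidW n (encode n I) := by
  have hlen : (encode n I).length = 2*n := encode_length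
  have hX2n := (encode_XY hI (2*n) le_rfl).1
  have hY2n := (encode_XY hI (2*n) le_rfl).2
  have hc2n : cF n I (2*n) = 0 := by
    rw [cF_zero_iff]; exact slice_empty_late (by omega)
  refine ⟨hlen, ?_, ?_, ?_, ?_⟩
  · intro k
    rcases le_or_gt k (2*n) with h | h
    · obtain ⟨hx, hy⟩ := encode_XY hI k h
      have := two_qF_le (n := n) (I := I) (s := k) h
      constructor
      · rw [hx]; push_cast; omega
      · rw [hy]; positivity
    · rw [walkX_stab (by omega), walkY_stab (by omega), hlen, hX2n, hY2n, qF_final, hc2n]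
      constructor
      · push_cast; omega
      · simp
  · rw [hlen, hX2n, qF_final]; push_cast; ring
  · rw [hlen, hY2n, hc2n]; simp
  · -- NoWThenE
    intro k ⟨hw, hy0, he⟩
    rcases Nat.lt_or_ge (k+1) (2*n) with hk | hk
    swap
    · rw [List.getElem?_eq_none_iff.2 (by rw [hlen]; omega)] at he
      exact absurd he (by simp)
    rw [encode_get (by omega)] at hw
    rw [encode_get hk] at he
    have hy1 : cF n I (k+1) = 0 := by
      have := (encode_XY hI (k+1) (by omega)).2
      rw [this] at hy0
      exact_mod_cast hy0
    -- extract step facts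
    have hwq : qF n I (k+1) = qF n I k + 1 ∧ cF n I (k+1) = cF n I k := by
      rcases stepOf_cases hI k with ⟨hst, h1, h2⟩ | ⟨hst, h1, h2⟩ | ⟨hst, h1, h2⟩ | ⟨hst, h1, h2⟩ <;>
        rw [hst] at hw <;> simp_all
    have heq : qF n I (k+2) = qF n I (k+1) ∧ cF n I (k+2) = cF n I (k+1) := by
      rcases stepOf_cases hI (k+1) with ⟨hst, h1, h2⟩ | ⟨hst, h1, h2⟩ | ⟨hst, h1, h2⟩ | ⟨hst, h1, h2⟩ <;>
        rw [hst] at he <;> simp_all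
    -- now the combinatorial contradiction
    have hne1 : ¬ (sliceF n I (k+1)).Nonempty := cF_zero_iff.1 hy1
    have hq1 : 1 ≤ qF n I (k+1) := by omega
    -- where is the max attained?
    rw [qF] at hq1
    rcases le_total ((Finset.range (2*n+1)).sup (fun t =>
        if (sliceF n I t).Nonempty then (if t ≤ (k+1) then AF n I t else BF n I t + (k+1) - t) else 0))
        ((k+1) - n) with hmax | hmax
    · -- attained at (k+1) - n
      have hv : qF n I (k+1) = (k+1) - n := by rw [qF, max_eq_left hmax]
      have : (k+2) - n ≤ qF n I (k+2) := sub_le_qF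
      omega
    · have hv : qF n I (k+1) = (Finset.range (2*n+1)).sup (fun t =>
          if (sliceF n I t).Nonempty then (if t ≤ (k+1) then AF n I t else BF n I t + (k+1) - t) else 0) := by
        rw [qF, max_eq_right hmax]
      obtain ⟨t, htm, hat⟩ := Finset.exists_mem_eq_sup (Finset.range (2*n+1))
        ⟨0, Finset.mem_range.2 (by omega)⟩ (fun t =>
          if (sliceF n I t).Nonempty then (if t ≤ (k+1) then AF n I t else BF n I t + (k+1) - t) else 0)
      rw [Finset.mem_range] at htm
      rw [hat] at hv
      by_cases hne : (sliceF n I t).Nonempty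
      swap
      · rw [if_neg hne] at hv; omega
      rw [if_pos hne] at hv
      by_cases hts : t ≤ k+1
      · rw [if_pos hts] at hv
        have hts' : t ≤ k := by
          rcases Nat.lt_or_ge t (k+1) with h | h
          · omega
          · have : t = k+1 := by omega
            subst this; exact absurd hne hne1
        have := le_qF_A (n := n) (I := I) (s := k) (by omega) hne hts'
        omega
      · rw [if_neg hts] at hv
        push_neg at hts
        rcases Nat.lt_or_ge (k+2) t with h | h
        · have := le_qF_B (n := n) (I := I) (s := k+2) (by omega) hne h
          have hb := BF_bounds hne
          omega
        · have : t = k+2 := by omega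
          subst this
          have : cF n I (k+2) = 0 := by omega
          rw [cF_zero_iff] at this
          exact this hne

end EncodeLemmas

section DecodeLemmas

variable {n : ℕ} {W : List QStep} {s t : ℕ}

lemma mem_decode {e : P n} :
    e ∈ decode n W ↔
      ((sOf e : ℤ) - walkX W (sOf e) - 2 * walkY W (sOf e) < 2 * (iOf e) ∧
       ((2 * (iOf e) : ℤ) ≤ (sOf e : ℤ) - walkX W (sOf e))) := by
  unfold decode
  simp only [Finset.mem_filter, Finset.mem_univ, true_and]

lemma sub_X_lip {s t : ℕ} (h : s ≤ t) (W : List QStep) :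
    (t:ℤ) - walkX W t ≤ (s:ℤ) - walkX W s + 2*((t:ℤ) - s) := by
  induction t with
  | zero =>
    have : s = 0 := by omega
    subst this; simp
  | succ t ih =>
    rcases Nat.lt_or_ge s (t+1) with hlt | hge
    · have h2 := (sub_X_step W t).2
      have := ih (by omega)
      push_cast at *; omega
    · have : s = t + 1 := by omega
      subst this; simp

lemma sub_XY_lip {s t : ℕ} (h : s ≤ t) (W : List QStep) :
    (t:ℤ) - walkX W t - 2 * walkY W t ≤
      (s:ℤ) - walkX W s - 2 * walkY W s + 2*((t:ℤ) - s) := by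
  induction t with
  | zero =>
    have : s = 0 := by omega
    subst this; simp
  | succ t ih =>
    rcases Nat.lt_or_ge s (t+1) with hlt | hge
    · have h2 := (sub_XY_step W t).2
      have := ih (by omega)
      push_cast at *; omega
    · have : s = t + 1 := by omega
      subst this; simp

lemma decode_cvx : Cvx (decode n W) := by
  intro x hx y hy z hlt1 hlt2
  rw [mem_decode] at hx hy ⊢
  obtain ⟨⟨h1, h2⟩, _⟩ := hlt1
  obtain ⟨⟨h3, h4⟩, _⟩ := hlt2
  rw [Fin.le_def] at h1 h2 h3 h4
  have hzx : iOf z ≤ iOf x ∧ jOf x ≤ jOf z := by unfold iOf jOf at *; omega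
  have hzy : iOf y ≤ iOf z ∧ jOf z ≤ jOf y := by unfold iOf jOf at *; omega
  constructor
  · -- P2(sOf z) < 2 iOf z, via s'' := iOf y + jOf z
    have hs1 : iOf y + jOf z ≤ sOf y := by unfold sOf; omega
    have hs2 : iOf y + jOf z ≤ sOf z := by unfold sOf; omega
    have hmono := sub_XY_mono hs1 W
    have hlip := sub_XY_lip hs2 W
    have hy1 := hy.1
    have hsz : (sOf z : ℤ) - (iOf y + jOf z) = (iOf z : ℤ) - iOf y := by
      unfold sOf; push_cast; ring
    have hiz : (iOf y : ℤ) ≤ iOf z := by exact_mod_cast hzy.1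
    omega
  · -- 2 iOf z ≤ Q2(sOf z), via s' := iOf z + jOf x
    have hs1 : iOf z + jOf x ≤ sOf x := by unfold sOf; omega
    have hs2 : iOf z + jOf x ≤ sOf z := by unfold sOf; omega
    have hmono := sub_X_mono hs2 W
    have hlip := sub_X_lip hs1 W
    have hx2 := hx.2
    have hsx : (sOf x : ℤ) - (iOf z + jOf x) = (iOf x : ℤ) - iOf z := by
      unfold sOf; push_cast; ring
    have hiz : (iOf z : ℤ) ≤ iOf x := by exact_mod_cast hzx.1
    omega

lemma valid_XY_le_back (hV : ValidW n W) (hs : s ≤ 2*n) :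
    walkX W s + 2 * walkY W s ≤ 2*n - s := by
  obtain ⟨hlen, _, hx0, hy0, _⟩ := hV
  rw [hlen] at hx0 hy0
  have := XY_le_back W hs
  rw [hx0, hy0] at this
  push_cast at this ⊢
  omega

lemma valid_Y_late (hV : ValidW n W) (hs : 2*n ≤ s) : walkY W s = 0 ∧ walkX W s = 0 := by
  obtain ⟨hlen, _, hx0, hy0, _⟩ := hV
  rw [walkY_stab (by omega), walkX_stab (by omega)]
  exact ⟨hy0, hx0⟩

lemma decode_mem_slice (hV : ValidW n W) {i s : ℕ} :
    i ∈ sliceF n (decode n W) s ↔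
      ((s : ℤ) - walkX W s - 2 * walkY W s < 2 * i ∧ (2 * i : ℤ) ≤ (s:ℤ) - walkX W s) := by
  constructor
  · intro h
    obtain ⟨e, he, hse, hie⟩ := mem_sliceF.1 h
    rw [mem_decode] at he
    rw [hse, hie] at he
    exact he
  · rintro ⟨h1, h2⟩
    have hX := (hV.2.1 s).1
    have hY := (hV.2.1 s).2
    have hP2 : (0:ℤ) ≤ (s:ℤ) - walkX W s - 2 * walkY W s := by
      have := XY_le_s W s; omega
    rcases le_or_gt s (2*n) with hs2n | hs2n
    swap
    · exfalso
      obtain ⟨hy0, hx0⟩ := valid_Y_late (s := s) hV (by omega)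
      simp only [hy0, hx0] at h1 h2
      omega
    have hback := valid_XY_le_back hV hs2n
    have hi1 : 1 ≤ i := by omega
    have hi2 : i ≤ s - i := by omega
    have hi3 : s - i ≤ n - 1 := by
      -- 2*i > s - X - 2Y ≥ s - (2n - s) = 2s - 2n
      have : (2*(s:ℤ) - 2*n) < 2 * i := by push_cast at hback ⊢; omega
      omega
    have hz : mkE (n := n) i (s - i) hi1 hi2 hi3 ∈ decode n W := by
      rw [mem_decode, iOf_mkE, sOf_mkE]
      have hsi : i + (s - i) = s := by omega
      rw [hsi]
      exact ⟨h1, h2⟩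
    have := mem_sliceF_of hz
    rw [iOf_mkE, sOf_mkE] at this
    have hsi : i + (s - i) = s := by omega
    rwa [hsi] at this

lemma decode_slice_empty_y0 (hV : ValidW n W) (hy : walkY W s = 0) :
    ¬ (sliceF n (decode n W) s).Nonempty := by
  rintro ⟨i, hi⟩
  rw [decode_mem_slice hV] at hi
  rw [hy] at hi
  omega

lemma decode_slice_vals (hV : ValidW n W) (hs : s ≤ 2*n) (hy : 1 ≤ walkY W s) :
    (sliceF n (decode n W) s).Nonempty ∧
    2 * (AF n (decode n W) s : ℤ) = (s:ℤ) - walkX W s ∧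
    2 * (BF n (decode n W) s : ℤ) = (s:ℤ) - walkX W s - 2 * walkY W s + 2 ∧
    (cF n (decode n W) s : ℤ) = walkY W s := by
  obtain ⟨m, hm⟩ := X_parity W (show s ≤ W.length by rw [hV.1]; omega)
  -- hm : (s:ℤ) - walkX W s = 2 * m
  have hX := (hV.2.1 s).1
  have hY := (hV.2.1 s).2
  have hP2 : (0:ℤ) ≤ (s:ℤ) - walkX W s - 2 * walkY W s := by
    have := XY_le_s W s; omega
  have hm0 : 0 ≤ m := by omega
  have hmY : walkY W s ≤ m := by omega
  -- top element
  obtain ⟨a, ha⟩ : ∃ a : ℕ, (a : ℤ) = m := ⟨m.toNat, Int.toNat_of_nonneg hm0⟩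
  obtain ⟨b, hb⟩ : ∃ b : ℕ, (b : ℤ) = m - walkY W s + 1 := ⟨(m - walkY W s + 1).toNat, by
    rw [Int.toNat_of_nonneg]; omega⟩
  have hamem : a ∈ sliceF n (decode n W) s := by
    rw [decode_mem_slice hV]; push_cast; omega
  have hbmem : b ∈ sliceF n (decode n W) s := by
    rw [decode_mem_slice hV]; push_cast; omega
  have hne : (sliceF n (decode n W) s).Nonempty := ⟨a, hamem⟩
  have hA : AF n (decode n W) s = a := by
    apply le_antisymm
    · have := decode_mem_slice hV (i := AF n (decode n W) s) (s := s) |>.1 (AF_mem hne)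
      omega
    · exact le_AF hamem
  have hB : BF n (decode n W) s = b := by
    apply le_antisymm
    · exact BF_le hbmem
    · have := decode_mem_slice hV (i := BF n (decode n W) s) (s := s) |>.1 (BF_mem hne)
      omega
  refine ⟨hne, ?_, ?_, ?_⟩
  · rw [hA, ha]; omega
  · rw [hB, hb]; push_cast; omega
  · rw [cF_eq decode_cvx hne, hA, hB]
    push_cast
    omega

lemma decode_cF (hV : ValidW n W) (hs : s ≤ 2*n) :
    (cF n (decode n W) s : ℤ) = walkY W s := by
  rcases Nat.eq_zero_or_pos (walkY W s).toNat with h | h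
  · have hy : walkY W s = 0 := by
      have := (hV.2.1 s).2; omega
    rw [hy, cF_eq_zero (decode_slice_empty_y0 hV hy)]
    simp
  · have hy : 1 ≤ walkY W s := by omega
    exact (decode_slice_vals hV hs hy).2.2.2

end DecodeLemmas

section QRecovery

variable {n : ℕ} {W : List QStep} {s : ℕ}

lemma slice_ne_y_pos (hV : ValidW n W) (hne : (sliceF n (decode n W) t).Nonempty) :
    1 ≤ walkY W t := by
  have hY := (hV.2.1 t).2
  rcases eq_or_lt_of_le hY with h | h
  · exact absurd hne (decode_slice_empty_y0 hV h.symm)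
  · omega

lemma qF_le_qW (hV : ValidW n W) (hs : s ≤ 2*n) :
    2 * (qF n (decode n W) s : ℤ) ≤ (s:ℤ) - walkX W s := by
  have hX := (hV.2.1 s).1
  have hY := (hV.2.1 s).2
  have hXs : walkX W s + 2 * walkY W s ≤ s := XY_le_s W s
  have hback := valid_XY_le_back hV hs
  rw [qF]
  rcases le_total ((2*n : ℕ) - n) 0 with _ | _  -- dummy to keep structure simple
  all_goals {
    rcases le_total ((s : ℕ) - n) ((Finset.range (2*n+1)).sup (fun t =>
      if (sliceF n (decode n W) t).Nonempty then
        (if t ≤ s then AF n (decode n W) t else BF n (decode n W) t + s - t) else 0))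
      with hmx | hmx
    · rw [max_eq_right hmx]
      obtain ⟨t, htm, hat⟩ := Finset.exists_mem_eq_sup (Finset.range (2*n+1))
        ⟨0, Finset.mem_range.2 (by omega)⟩ (fun t =>
          if (sliceF n (decode n W) t).Nonempty then
            (if t ≤ s then AF n (decode n W) t else BF n (decode n W) t + s - t) else 0)
      rw [Finset.mem_range] at htm
      rw [hat]
      by_cases hne : (sliceF n (decode n W) t).Nonempty
      swap
      · rw [if_neg hne]; push_cast; omega
      rw [if_pos hne]
      have hyt : 1 ≤ walkY W t := slice_ne_y_pos hV hne
      have htb := slice_diag_bounds hne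
      obtain ⟨_, hAt, hBt, _⟩ := decode_slice_vals hV (by omega) hyt
      by_cases hts : t ≤ s
      · rw [if_pos hts]
        have := sub_X_mono hts W
        omega
      · rw [if_neg hts]
        push_neg at hts
        have hlip := sub_X_lip (le_of_lt hts) W
        have hYt := (hV.2.1 t).2
        -- 2 BF t ≤ t - X t ; term = BF t + s - t (ℕ)
        rcases le_or_gt (BF n (decode n W) t + s) t with htr | htr
        · have : BF n (decode n W) t + s - t = 0 := by omega
          rw [this]; push_cast; omega
        · have hcast : ((BF n (decode n W) t + s - t : ℕ) : ℤ)
              = (BF n (decode n W) t : ℤ) + s - t := by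
            push_cast [Nat.cast_sub (by omega : t ≤ BF n (decode n W) t + s)]
            ring
          rw [hcast]  -- may fail: goal not in cast form; handled below
          omega
    · rw [max_eq_left hmx]
      push_cast
      omega }

lemma prop_w (hV : ValidW n W) :
    ∀ d s, 2*n - s = d → 1 ≤ s → s ≤ 2*n → W[(s-1)]? = some QStep.w →
      walkY W s = 0 → (s:ℤ) - walkX W s ≤ 2 * (qF n (decode n W) s : ℤ) := by
  intro d
  induction d with
  | zero =>
    intro s hd h1 h2 _ _
    have hs : s = 2*n := by omega
    subst hs
    obtain ⟨hy0, hx0⟩ := valid_Y_late (s := 2*n) hV le_rfl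
    rw [hx0]
    have := sub_le_qF (n := n) (I := decode n W) (s := 2*n)
    have hc : (2*n : ℕ) - n = n := by omega
    rw [hc] at this
    push_cast
    omega
  | succ d ih =>
    intro s hd h1 h2 hw hy
    have hslt : s < 2*n := by omega
    have hlen : s < W.length := by rw [hV.1]; omega
    obtain ⟨st, hst⟩ := get?_some_of_lt hlen
    have hs1 : s - 1 + 1 = s := by omega
    cases st with
    | e =>
      exfalso
      apply hV.2.2.2.2 (s-1)
      rw [hs1]
      exact ⟨hw, hy, hst⟩
    | w =>
      have hx1 : walkX W (s+1) = walkX W s + (-1) := by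
        rw [walkX_succ hst]; rfl
      have hy1 : walkY W (s+1) = 0 := by
        rw [walkY_succ hst, hy]; rfl
      have hih := ih (s+1) (by omega) (by omega) (by omega)
        (by rw [Nat.add_sub_cancel]; exact hst) hy1
      have hlip := qF_lip (n := n) (I := decode n W) (s := s) decode_cvx
      rw [hx1] at hih
      push_cast at hih ⊢
      omega
    | se =>
      exfalso
      have : walkY W (s+1) = -1 := by
        rw [walkY_succ hst, hy]; rfl
      have := (hV.2.1 (s+1)).2
      omega
    | nw =>
      have hx1 : walkX W (s+1) = walkX W s + (-1) := by
        rw [walkX_succ hst]; rfl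
      have hy1 : walkY W (s+1) = 1 := by
        rw [walkY_succ hst, hy]; rfl
      obtain ⟨hne, _, hBt, _⟩ := decode_slice_vals hV (by omega : s+1 ≤ 2*n) (by omega)
      have hterm := le_qF_B (n := n) (I := decode n W) (s := s) (t := s+1)
        (by omega) hne (by omega)
      have hBb := BF_bounds hne
      rw [hx1, hy1] at hBt
      -- 2 BF (s+1) = s + 1 - (X s - 1) - 2 + 2 = s - X s + 2
      have : BF n (decode n W) (s+1) + s - (s+1) = BF n (decode n W) (s+1) - 1 := by omega
      rw [this] at hterm
      have hc : ((BF n (decode n W) (s+1) - 1 : ℕ) : ℤ)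
          = (BF n (decode n W) (s+1) : ℤ) - 1 := by
        push_cast [Nat.cast_sub (by omega : 1 ≤ BF n (decode n W) (s+1))]
        ring
      have : ((BF n (decode n W) (s+1) - 1 : ℕ) : ℤ) ≤ (qF n (decode n W) s : ℤ) := by
        exact_mod_cast hterm
      rw [hc] at this
      push_cast at *
      omega

lemma fwd_w (hV : ValidW n W) :
    ∀ s, s ≤ 2*n → walkY W s = 0 →
      ((s:ℤ) - walkX W s ≤ 0) ∨
      (∃ t, t ≤ s ∧ 1 ≤ walkY W t ∧ (s:ℤ) - walkX W s ≤ (t:ℤ) - walkX W t) ∨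
      (1 ≤ s ∧ W[(s-1)]? = some QStep.w) := by
  intro s
  induction s with
  | zero => intro _ _; left; simp
  | succ s ih =>
    intro hs hy1
    have hlen : s < W.length := by rw [hV.1]; omega
    obtain ⟨st, hst⟩ := get?_some_of_lt hlen
    have hys := walkY_succ hst
    have hxs := walkX_succ hst
    cases st with
    | e =>
      have hy0 : walkY W s = 0 := by
        rw [hys] at hy1; simpa [QStep.dy] using hy1
      have hxv : walkX W (s+1) = walkX W s + 1 := by rw [hxs]; rfl
      rcases ih (by omega) hy0 with h | ⟨t, ht1, ht2, ht3⟩ | ⟨hs1, hw⟩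
      · left; rw [hxv]; push_cast; omega
      · right; left
        exact ⟨t, by omega, ht2, by rw [hxv]; push_cast at ht3 ⊢; omega⟩
      · exfalso
        apply hV.2.2.2.2 (s-1)
        have hc : s - 1 + 1 = s := by omega
        rw [hc]
        exact ⟨hw, hy0, hst⟩
    | w =>
      right; right
      rw [Nat.add_sub_cancel]
      exact ⟨by omega, hst⟩
    | se =>
      have hy0 : walkY W s = 1 := by
        rw [hys] at hy1; simp [QStep.dy] at hy1; omega
      have hxv : walkX W (s+1) = walkX W s + 1 := by rw [hxs]; rfl
      right; left
      exact ⟨s, by omega, by omega, by rw [hxv]; push_cast; omega⟩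
    | nw =>
      exfalso
      have := (hV.2.1 s).2
      rw [hys] at hy1; simp [QStep.dy] at hy1; omega

lemma qW_le_qF (hV : ValidW n W) (hs : s ≤ 2*n) :
    (s:ℤ) - walkX W s ≤ 2 * (qF n (decode n W) s : ℤ) := by
  have hY := (hV.2.1 s).2
  rcases eq_or_lt_of_le hY with hy0 | hy1
  · -- Y s = 0
    rcases fwd_w hV s hs hy0.symm with h | ⟨t, ht1, ht2, ht3⟩ | ⟨h1, hw⟩
    · have : (0:ℤ) ≤ (qF n (decode n W) s : ℤ) := by positivity
      omega
    · obtain ⟨hne, hAt, _, _⟩ := decode_slice_vals hV (by omega) ht2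
      have := le_qF_A (n := n) (I := decode n W) (s := s) (t := t)
        (by omega) hne ht1
      have hcast : (AF n (decode n W) t : ℤ) ≤ (qF n (decode n W) s : ℤ) := by
        exact_mod_cast this
      omega
    · exact prop_w hV (2*n - s) s rfl h1 hs hw hy0.symm
  · obtain ⟨hne, hAs, _, _⟩ := decode_slice_vals hV hs (by omega)
    have := le_qF_A (n := n) (I := decode n W) (s := s) (t := s)
      (by omega) hne le_rfl
    have hcast : (AF n (decode n W) s : ℤ) ≤ (qF n (decode n W) s : ℤ) := by
      exact_mod_cast this
    omega

lemma decode_qF (hV : ValidW n W) (hs : s ≤ 2*n) :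
    2 * (qF n (decode n W) s : ℤ) = (s:ℤ) - walkX W s :=
  le_antisymm (qF_le_qW hV hs) (qW_le_qF hV hs)

end QRecovery

section Assembly

variable {n : ℕ}

lemma encode_decode {W : List QStep} (hV : ValidW n W) : encode n (decode n W) = W := by
  apply List.ext_getElem?
  intro t
  rcases Nat.lt_or_ge t (2*n) with ht | ht
  · rw [encode_get ht]
    have hlen : t < W.length := by rw [hV.1]; omega
    obtain ⟨st, hst⟩ := get?_some_of_lt hlen
    rw [hst]
    congr 1
    have hq := decode_qF hV (show t ≤ 2*n by omega)
    have hq1 := decode_qF hV (show t+1 ≤ 2*n by omega)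
    have hc := decode_cF hV (show t ≤ 2*n by omega)
    have hc1 := decode_cF hV (show t+1 ≤ 2*n by omega)
    have hxs := walkX_succ hst
    have hys := walkY_succ hst
    cases st with
    | e =>
      have h1 : qF n (decode n W) (t+1) = qF n (decode n W) t := by
        rw [hxs] at hq1; simp [QStep.dx] at hq1; push_cast at hq hq1; omega
      have h2 : cF n (decode n W) (t+1) = cF n (decode n W) t := by
        rw [hys] at hc1; simp [QStep.dy] at hc1; omega
      unfold stepOf; rw [if_pos h1, if_pos h2]
    | w =>
      have h1 : qF n (decode n W) (t+1) = qF n (decode n W) t + 1 := by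
        rw [hxs] at hq1; simp [QStep.dx] at hq1; push_cast at hq hq1; omega
      have h2 : cF n (decode n W) (t+1) = cF n (decode n W) t := by
        rw [hys] at hc1; simp [QStep.dy] at hc1; omega
      unfold stepOf; rw [if_neg (by omega), if_pos h2]
    | se =>
      have h1 : qF n (decode n W) (t+1) = qF n (decode n W) t := by
        rw [hxs] at hq1; simp [QStep.dx] at hq1; push_cast at hq hq1; omega
      have h2 : cF n (decode n W) (t+1) + 1 = cF n (decode n W) t := by
        rw [hys] at hc1; simp [QStep.dy] at hc1; omega
      unfold stepOf; rw [if_pos h1, if_neg (by omega)]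
    | nw =>
      have h1 : qF n (decode n W) (t+1) = qF n (decode n W) t + 1 := by
        rw [hxs] at hq1; simp [QStep.dx] at hq1; push_cast at hq hq1; omega
      have h2 : cF n (decode n W) (t+1) = cF n (decode n W) t + 1 := by
        rw [hys] at hc1; simp [QStep.dy] at hc1; omega
      unfold stepOf; rw [if_neg (by omega), if_neg (by omega)]
  · rw [List.getElem?_eq_none_iff.2 (by rw [encode_length]; omega),
      List.getElem?_eq_none_iff.2 (by rw [hV.1]; omega)]

lemma decode_encode {I : Finset (P n)} (hI : Cvx I) : decode n (encode n I) = I := by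
  ext e
  rw [mem_decode]
  have hsb := sOf_le e
  have hjb := jOf_le e
  have hib := one_le_iOf e
  have hij := iOf_le_jOf e
  have hs2n : sOf e ≤ 2*n := by omega
  obtain ⟨hXv, hYv⟩ := encode_XY hI (sOf e) hs2n
  rw [hXv, hYv]
  constructor
  · rintro ⟨h1, h2⟩
    have hcpos : 1 ≤ cF n I (sOf e) := by
      by_contra hc
      push_neg at hc
      have hc0 : cF n I (sOf e) = 0 := by omega
      rw [hc0] at h1
      push_cast at h1 h2
      omega
    have hne : (sliceF n I (sOf e)).Nonempty := by
      rw [← Finset.card_pos]; exact hcpos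
    have hA := qF_eq_AF hI hne
    have hC := cF_eq hI hne
    have hBA := BF_le_AF hne
    have hmem : iOf e ∈ sliceF n I (sOf e) := by
      apply slice_interval hI (BF_mem hne) (AF_mem hne)
      · rw [hA] at h2; rw [hA, hC] at h1; push_cast at h1 h2; omega
      · rw [hA] at h2; push_cast at h2; omega
    obtain ⟨e', he', hse', hie'⟩ := mem_sliceF.1 hmem
    have : e' = e := by
      apply eq_of_iOf_jOf hie'
      unfold sOf at hse'
      omega
    rwa [this] at he'
  · intro he
    have hmem := mem_sliceF_of he
    have hne : (sliceF n I (sOf e)).Nonempty := ⟨_, hmem⟩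
    have hA := qF_eq_AF hI hne
    have hC := cF_eq hI hne
    have hBA := BF_le_AF hne
    have h1 := BF_le hmem
    have h2 := le_AF hmem
    rw [hA, hC]
    push_cast
    omega

end Assembly

end ICSW

/-- The interval-closed sets of the type `A` root poset `A_{n−1}` are in bijection
with first-quadrant walks of `2n` steps from the origin to the origin with steps
`{(1,0), (−1,0), (1,−1), (−1,1)}`, in which no `(−1,0)` step ending on the x-axis
is immediately followed by a `(1,0)` step. -/
theorem ics_typeA_root_equiv_walks (n : ℕ) :
    Nonempty ({I : Finset {p : Fin (n - 1) × Fin (n - 1) // p.1 ≤ p.2} //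
        ∀ x ∈ I, ∀ y ∈ I, ∀ z : {p : Fin (n - 1) × Fin (n - 1) // p.1 ≤ p.2},
          rootLT x.1 z.1 → rootLT z.1 y.1 → z ∈ I} ≃
      {W : List QStep // W.length = 2 * n ∧ InQuadrant W ∧
        walkX W W.length = 0 ∧ walkY W W.length = 0 ∧ NoWThenE W}) := by
  constructor
  exact
    { toFun := fun I => ⟨ICSW.encode n I.1, ICSW.encode_valid I.2⟩
      invFun := fun Wp => ⟨ICSW.decode n Wp.1, ICSW.decode_cvx⟩
      left_inv := fun I => Subtype.ext (ICSW.decode_encode I.2)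
      right_inv := fun Wp => Subtype.ext (ICSW.encode_decode Wp.2) }
end
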